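/- arXiv:0707.4610 — 6 statements merged into one kernel-verified Lean document; each statement's English description precedes it below -/
import Mathlib

section
/- Let P be a harmonic polynomial on ℝⁿ, homogeneous of degree 2j with j ≥ 1, and write P(x) = Σ_α c_α x^α in multi-index notation. Denote by P(∂) the constant-coefficient differential operator Σ_α c_α ∂^α, where ∂^α = ∂₁^{α₁}⋯∂ₙ^{αₙ}. Let k be a non-negative integer and let f(x) = |x|^{2k} = (x₁²+⋯+xₙ²)^k. If 2j ≤ k, then for all x ∈ ℝⁿ, (P(∂)f)(x) = 2^{2j} · (k!/(k−2j)!) · P(x) · |x|^{2(k−2j)}. If 2j > k, then P(∂)f is identically zero. -/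
open MvPolynomial

/-- The constant-coefficient differential operator `P(∂) = Σ_α c_α ∂^α` associated to the
polynomial `P = Σ_α c_α x^α`, applied to the polynomial `f`. -/
noncomputable def mvDiffOp {n : ℕ} (P f : MvPolynomial (Fin n) ℝ) : MvPolynomial (Fin n) ℝ :=
  ∑ α ∈ P.support, P.coeff α •
    ((List.finRange n).foldr (fun i q => (fun r => pderiv i r)^[α i] q) f)

variable {n : ℕ}

noncomputable def Dop (α : Fin n →₀ ℕ) (f : MvPolynomial (Fin n) ℝ) : MvPolynomial (Fin n) ℝ :=
  (List.finRange n).foldr (fun i q => (fun r => pderiv i r)^[α i] q) f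

lemma pderiv_comm' (i j : Fin n) (f : MvPolynomial (Fin n) ℝ) :
    pderiv i (pderiv j f) = pderiv j (pderiv i f) := by
  induction f using MvPolynomial.induction_on with
  | C a => simp
  | add p q hp hq => simp [hp, hq]
  | mul_X p s hp =>
      have h1 : ∀ a b : Fin n, (pderiv a (X b) : MvPolynomial (Fin n) ℝ) = C (if b = a then 1 else 0) := by
        intro a b
        rcases eq_or_ne b a with rfl | h
        · simp
        · simp [pderiv_X_of_ne h, h]
      simp only [pderiv_mul, map_add, pderiv_mul, hp, h1, pderiv_C]
      ring

lemma pderiv_iterate_comm (i j : Fin n) (m : ℕ) (f : MvPolynomial (Fin n) ℝ) :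
    pderiv i ((fun r => pderiv j r)^[m] f) = (fun r => pderiv j r)^[m] (pderiv i f) := by
  induction m generalizing f with
  | zero => simp
  | succ m ih => rw [Function.iterate_succ_apply, Function.iterate_succ_apply, ih, pderiv_comm']

lemma iterate_pderiv_add (i : Fin n) (m : ℕ) (f g : MvPolynomial (Fin n) ℝ) :
    (fun r => pderiv i r)^[m] (f + g)
      = (fun r => pderiv i r)^[m] f + (fun r => pderiv i r)^[m] g := by
  induction m generalizing f g with
  | zero => simp
  | succ m ih => rw [Function.iterate_succ_apply, Function.iterate_succ_apply,
      Function.iterate_succ_apply, map_add, ih]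

lemma iterate_pderiv_smul (i : Fin n) (m : ℕ) (c : ℝ) (f : MvPolynomial (Fin n) ℝ) :
    (fun r => pderiv i r)^[m] (c • f) = c • (fun r => pderiv i r)^[m] f := by
  induction m generalizing f with
  | zero => simp
  | succ m ih => rw [Function.iterate_succ_apply, Function.iterate_succ_apply, Derivation.map_smul, ih]

lemma foldr_pderiv_comm (α : Fin n →₀ ℕ) (i : Fin n) (f : MvPolynomial (Fin n) ℝ)
    (l : List (Fin n)) :
    pderiv i (l.foldr (fun i q => (fun r => pderiv i r)^[α i] q) f)
      = l.foldr (fun i q => (fun r => pderiv i r)^[α i] q) (pderiv i f) := by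
  induction l generalizing f with
  | nil => rfl
  | cons j t ih => simp only [List.foldr_cons, pderiv_iterate_comm, ih]

lemma foldr_iterate_comm (α : Fin n →₀ ℕ) (i : Fin n) (m : ℕ) (f : MvPolynomial (Fin n) ℝ)
    (l : List (Fin n)) :
    (fun r => pderiv i r)^[m] (l.foldr (fun i q => (fun r => pderiv i r)^[α i] q) f)
      = l.foldr (fun i q => (fun r => pderiv i r)^[α i] q) ((fun r => pderiv i r)^[m] f) := by
  induction m generalizing f with
  | zero => rfl
  | succ m ih => rw [Function.iterate_succ_apply, Function.iterate_succ_apply,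
      foldr_pderiv_comm, ih]

lemma Dop_zero (f : MvPolynomial (Fin n) ℝ) : Dop 0 f = f := by
  unfold Dop
  induction (List.finRange n) with
  | nil => rfl
  | cons j t ih => simpa using ih

lemma Dop_add (α β : Fin n →₀ ℕ) (f : MvPolynomial (Fin n) ℝ) :
    Dop (α + β) f = Dop α (Dop β f) := by
  unfold Dop
  induction (List.finRange n) generalizing f with
  | nil => rfl
  | cons j t ih =>
      simp only [List.foldr_cons]
      rw [show (α + β) j = α j + β j from rfl, Function.iterate_add_apply, ih,
        foldr_iterate_comm]

lemma foldr_eq_self (α : Fin n →₀ ℕ) (f : MvPolynomial (Fin n) ℝ) (l : List (Fin n))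
    (h : ∀ j ∈ l, α j = 0) :
    l.foldr (fun i q => (fun r => pderiv i r)^[α i] q) f = f := by
  induction l with
  | nil => rfl
  | cons j t ih =>
      simp only [List.foldr_cons, h j List.mem_cons_self, Function.iterate_zero, id]
      exact ih fun a ha => h a (List.mem_cons_of_mem _ ha)

lemma Dop_single (i : Fin n) (f : MvPolynomial (Fin n) ℝ) :
    Dop (Finsupp.single i 1) f = pderiv i f := by
  unfold Dop
  have key : ∀ l : List (Fin n), l.Nodup → i ∈ l →
      l.foldr (fun j q => (fun r => pderiv j r)^[(Finsupp.single i 1) j] q) f = pderiv i f := by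
    intro l hnd hmem
    induction l with
    | nil => simp at hmem
    | cons j t ih =>
        rcases eq_or_ne j i with rfl | hji
        · have hnotin : j ∉ t := (List.nodup_cons.mp hnd).1
          simp only [List.foldr_cons, Finsupp.single_eq_same]
          have hz : ∀ a ∈ t, (Finsupp.single j 1 : Fin n →₀ ℕ) a = 0 := by
            intro a ha
            rcases eq_or_ne j a with rfl | hne
            · exact absurd ha hnotin
            · exact Finsupp.single_eq_of_ne (Ne.symm hne)
          rw [foldr_eq_self _ _ _ hz]
          rfl
        · have hmem' : i ∈ t := by
            rcases List.mem_cons.mp hmem with h | h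
            · exact absurd h.symm hji
            · exact h
          have hz0 : (Finsupp.single i 1 : Fin n →₀ ℕ) j = 0 :=
            Finsupp.single_eq_of_ne hji
          simp only [List.foldr_cons, hz0, Function.iterate_zero, id]
          exact ih (List.nodup_cons.mp hnd).2 hmem'
  exact key _ (List.nodup_finRange n) (List.mem_finRange i)

lemma Dop_add_right (α : Fin n →₀ ℕ) (f g : MvPolynomial (Fin n) ℝ) :
    Dop α (f + g) = Dop α f + Dop α g := by
  unfold Dop
  induction (List.finRange n) generalizing f g with
  | nil => rfl
  | cons j t ih => simp only [List.foldr_cons, ih, iterate_pderiv_add]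

lemma Dop_smul_right (α : Fin n →₀ ℕ) (c : ℝ) (f : MvPolynomial (Fin n) ℝ) :
    Dop α (c • f) = c • Dop α f := by
  unfold Dop
  induction (List.finRange n) generalizing f with
  | nil => rfl
  | cons j t ih => simp only [List.foldr_cons, ih, iterate_pderiv_smul]

lemma mvDiffOp_eq_sum (P f : MvPolynomial (Fin n) ℝ) :
    mvDiffOp P f = ∑ α ∈ P.support, P.coeff α • Dop α f := rfl

lemma mvDiffOp_eq_finsupp_sum (P f : MvPolynomial (Fin n) ℝ) :
    mvDiffOp P f = (AddMonoidAlgebra.coeff P).sum fun α c => c • Dop α f := rfl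

lemma mvDiffOp_add_left (P Q f : MvPolynomial (Fin n) ℝ) :
    mvDiffOp (P + Q) f = mvDiffOp P f + mvDiffOp Q f := by
  simp only [mvDiffOp_eq_finsupp_sum]
  exact Finsupp.sum_add_index' (fun α => zero_smul ℝ _) (fun α b₁ b₂ => add_smul _ _ _)

lemma mvDiffOp_monomial (α : Fin n →₀ ℕ) (c : ℝ) (f : MvPolynomial (Fin n) ℝ) :
    mvDiffOp (monomial α c) f = c • Dop α f := by
  rw [mvDiffOp_eq_finsupp_sum]
  exact Finsupp.sum_single_index (zero_smul ℝ _)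

lemma mvDiffOp_zero (f : MvPolynomial (Fin n) ℝ) : mvDiffOp 0 f = 0 := by
  simp [mvDiffOp_eq_sum]

lemma mvDiffOp_sum {ι : Type*} (s : Finset ι) (P : ι → MvPolynomial (Fin n) ℝ)
    (f : MvPolynomial (Fin n) ℝ) :
    mvDiffOp (∑ i ∈ s, P i) f = ∑ i ∈ s, mvDiffOp (P i) f := by
  classical
  induction s using Finset.induction_on with
  | empty => simp [mvDiffOp_zero]
  | insert _ _ hnot ih =>
      rw [Finset.sum_insert hnot, mvDiffOp_add_left, ih, Finset.sum_insert hnot]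

lemma mvDiffOp_add_right (P f g : MvPolynomial (Fin n) ℝ) :
    mvDiffOp P (f + g) = mvDiffOp P f + mvDiffOp P g := by
  simp [mvDiffOp_eq_sum, Dop_add_right, smul_add, Finset.sum_add_distrib]

lemma mvDiffOp_smul_right (P : MvPolynomial (Fin n) ℝ) (c : ℝ) (f : MvPolynomial (Fin n) ℝ) :
    mvDiffOp P (c • f) = c • mvDiffOp P f := by
  simp [mvDiffOp_eq_sum, Dop_smul_right, Finset.smul_sum, smul_comm c]

lemma mvDiffOp_mul (P Q f : MvPolynomial (Fin n) ℝ) :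
    mvDiffOp (P * Q) f = mvDiffOp P (mvDiffOp Q f) := by
  induction Q using MvPolynomial.induction_on' with
  | add p q hp hq =>
      rw [mul_add, mvDiffOp_add_left, hp, hq, mvDiffOp_add_left, mvDiffOp_add_right]
  | monomial β d =>
      induction P using MvPolynomial.induction_on' with
      | add p q hp hq => rw [add_mul, mvDiffOp_add_left, hp, hq, mvDiffOp_add_left]
      | monomial α c =>
          rw [monomial_mul, mvDiffOp_monomial, mvDiffOp_monomial, mvDiffOp_monomial,
            Dop_add, Dop_smul_right, mul_smul]

lemma mvDiffOp_C (c : ℝ) (f : MvPolynomial (Fin n) ℝ) : mvDiffOp (C c) f = c • f := by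
  rw [show (C c : MvPolynomial (Fin n) ℝ) = monomial 0 c from rfl, mvDiffOp_monomial, Dop_zero]

lemma mvDiffOp_smul_left (c : ℝ) (P f : MvPolynomial (Fin n) ℝ) :
    mvDiffOp (c • P) f = c • mvDiffOp P f := by
  rw [smul_eq_C_mul, mvDiffOp_mul, mvDiffOp_C]

lemma mvDiffOp_X_mul (i : Fin n) (P f : MvPolynomial (Fin n) ℝ) :
    mvDiffOp (X i * P) f = pderiv i (mvDiffOp P f) := by
  rw [mvDiffOp_mul, show (X i : MvPolynomial (Fin n) ℝ) = monomial (Finsupp.single i 1) 1 from rfl,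
    mvDiffOp_monomial, Dop_single, one_smul]

lemma X_mul_pderiv_monomial (i : Fin n) (s : Fin n →₀ ℕ) (a : ℝ) :
    X i * pderiv i (monomial s a) = monomial s (a * s i) := by
  rw [pderiv_monomial]
  rcases Nat.eq_zero_or_pos (s i) with h | h
  · simp [h]
  · have hle : Finsupp.single i 1 ≤ s := by
      rw [Finsupp.single_le_iff]; exact h
    rw [show (X i : MvPolynomial (Fin n) ℝ) = monomial (Finsupp.single i 1) 1 from rfl,
      monomial_mul, one_mul, add_tsub_cancel_of_le hle]

lemma degree_eq_sum_univ (s : Fin n →₀ ℕ) : (s.degree : ℕ) = ∑ i : Fin n, s i := by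
  rw [Finsupp.degree]
  exact Finset.sum_subset (Finset.subset_univ _) (fun i _ hi => Finsupp.notMem_support_iff.mp hi)

lemma euler_identity {m : ℕ} {P : MvPolynomial (Fin n) ℝ} (hhom : P.IsHomogeneous m) :
    ∑ i : Fin n, X i * pderiv i P = (m : ℝ) • P := by
  have h1 : ∀ i : Fin n, X i * pderiv i P
      = ∑ s ∈ P.support, monomial s (P.coeff s * s i) := by
    intro i
    conv_lhs => rw [← P.support_sum_monomial_coeff]
    rw [map_sum, Finset.mul_sum]
    exact Finset.sum_congr rfl fun s _ => X_mul_pderiv_monomial i s _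
  simp only [h1]
  rw [Finset.sum_comm]
  conv_rhs => rw [← P.support_sum_monomial_coeff]
  rw [Finset.smul_sum]
  refine Finset.sum_congr rfl fun s hs => ?_
  have hdeg : s.degree = m := by
    rw [Finsupp.degree_eq_weight_one]
    exact hhom (mem_support_iff.mp hs)
  rw [← map_sum (monomial s) _ Finset.univ]
  have h2 : ∑ i : Fin n, P.coeff s * (s i : ℝ) = P.coeff s * m := by
    rw [← Finset.mul_sum]
    congr 1
    have h3 := degree_eq_sum_univ s
    rw [hdeg] at h3
    exact_mod_cast congrArg (Nat.cast : ℕ → ℝ) h3.symm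
  rw [h2, smul_monomial, smul_eq_mul, mul_comm]

lemma isHomogeneous_pderiv {m : ℕ} {P : MvPolynomial (Fin n) ℝ} (hhom : P.IsHomogeneous (m + 1))
    (i : Fin n) : (pderiv i P).IsHomogeneous m := by
  conv_lhs => rw [← P.support_sum_monomial_coeff]
  rw [map_sum]
  refine IsHomogeneous.sum _ _ _ fun s hs => ?_
  rw [pderiv_monomial]
  rcases Nat.eq_zero_or_pos (s i) with h | h
  · rw [h]
    norm_num
    exact isHomogeneous_zero _ _ _
  · apply isHomogeneous_monomial
    have hle : Finsupp.single i 1 ≤ s := by rw [Finsupp.single_le_iff]; exact h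
    have hadd : Finsupp.single i 1 + (s - Finsupp.single i 1) = s := add_tsub_cancel_of_le hle
    have hdeg : s.degree = m + 1 := by
      rw [Finsupp.degree_eq_weight_one]; exact hhom (mem_support_iff.mp hs)
    have hs1 : ∑ j : Fin n, s j = m + 1 := by rw [← degree_eq_sum_univ, hdeg]
    have hs2 : ∑ j : Fin n, s j
        = ∑ j : Fin n, ((Finsupp.single i 1 : Fin n →₀ ℕ) j + ((s - Finsupp.single i 1 : Fin n →₀ ℕ)) j) := by
      refine Finset.sum_congr rfl fun j _ => ?_
      rw [← Finsupp.add_apply, hadd]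
    have hs3 : ∑ j : Fin n, (Finsupp.single i 1 : Fin n →₀ ℕ) j = 1 := by
      simp [Finsupp.single_apply]
    rw [Finset.sum_add_distrib, hs3] at hs2
    rw [degree_eq_sum_univ]
    omega

lemma harmonic_pderiv {P : MvPolynomial (Fin n) ℝ}
    (hharm : ∑ i : Fin n, pderiv i (pderiv i P) = 0) (i : Fin n) :
    ∑ j : Fin n, pderiv j (pderiv j (pderiv i P)) = 0 := by
  have h : ∑ j : Fin n, pderiv j (pderiv j (pderiv i P))
      = pderiv i (∑ j : Fin n, pderiv j (pderiv j P)) := by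
    rw [map_sum]
    exact Finset.sum_congr rfl fun j _ => by
      rw [pderiv_comm' j i, pderiv_comm' j i]
  rw [h, hharm, map_zero]

lemma eq_C_of_isHomogeneous_zero {P : MvPolynomial (Fin n) ℝ} (h : P.IsHomogeneous 0) :
    P = C (P.coeff 0) := by
  ext d
  rcases eq_or_ne d 0 with rfl | hd
  · simp
  · rw [h.coeff_eq_zero, coeff_C, if_neg (Ne.symm hd)]
    rw [Finsupp.degree_eq_weight_one]
    intro hw
    apply hd
    ext i
    have h1 := degree_eq_sum_univ d
    rw [Finsupp.degree_eq_weight_one, hw] at h1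
    have h2 : d i = 0 := by
      have := Finset.sum_eq_zero_iff.mp h1.symm
      exact this i (Finset.mem_univ i)
    simp [h2]

noncomputable def Ck (m k : ℕ) : ℝ :=
  if m ≤ k then 2 ^ m * (Nat.factorial k : ℝ) / (Nat.factorial (k - m) : ℝ) else 0

lemma Ck_succ (m k : ℕ) : Ck (m + 1) k = 2 * ((k - m : ℕ) : ℝ) * Ck m k := by
  unfold Ck
  rcases le_or_gt (m + 1) k with h | h
  · rw [if_pos h, if_pos (by omega)]
    have h1 : k - m = (k - (m + 1)) + 1 := by omega
    have h2 : (Nat.factorial (k - m) : ℝ) = ((k - m : ℕ) : ℝ) * Nat.factorial (k - (m + 1)) := by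
      rw [h1, Nat.factorial_succ]; push_cast; ring
    have h3 : ((k - m : ℕ) : ℝ) ≠ 0 := by
      have : 0 < k - m := by omega
      positivity
    have h4 : (Nat.factorial (k - (m + 1)) : ℝ) ≠ 0 := by positivity
    rw [h2]
    field_simp
    ring
  · rw [if_neg (by omega)]
    rcases le_or_gt m k with h' | h'
    · have hkm : k = m := by omega
      subst hkm
      simp
    · rw [if_neg (by omega)]
      ring

lemma pderiv_Q (i : Fin n) :
    pderiv i (∑ j : Fin n, (X j : MvPolynomial (Fin n) ℝ) ^ 2) = 2 * X i := by
  rw [map_sum, Finset.sum_eq_single i]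
  · rw [pderiv_pow, pderiv_X_self]
    push_cast
    ring
  · intro j _ hj
    rw [pderiv_pow, pderiv_X_of_ne hj, mul_zero]
  · intro h
    exact absurd (Finset.mem_univ i) h

lemma main_lemma (k : ℕ) : ∀ (m : ℕ) (P : MvPolynomial (Fin n) ℝ),
    (∑ i : Fin n, pderiv i (pderiv i P) = 0) → P.IsHomogeneous m →
    mvDiffOp P ((∑ i : Fin n, X i ^ 2) ^ k)
      = Ck m k • (P * (∑ i : Fin n, X i ^ 2) ^ (k - m)) := by
  intro m
  induction m with
  | zero =>
      intro P _ hhom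
      rw [eq_C_of_isHomogeneous_zero hhom, mvDiffOp_C]
      unfold Ck
      have h1 : (2:ℝ) ^ 0 * (Nat.factorial k : ℝ) / (Nat.factorial (k - 0) : ℝ) = 1 := by
        have h2 : (Nat.factorial k : ℝ) ≠ 0 := by positivity
        rw [pow_zero, Nat.sub_zero, one_mul, div_self h2]
      rw [if_pos (Nat.zero_le k), h1, one_smul, Nat.sub_zero, smul_eq_C_mul]
  | succ m ih =>
      intro P hharm hhom
      set Q : MvPolynomial (Fin n) ℝ := ∑ i : Fin n, X i ^ 2 with hQ
      have heuler := euler_identity hhom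
      have hsmul : ((m + 1 : ℕ) : ℝ) • mvDiffOp P (Q ^ k)
          = mvDiffOp (((m + 1 : ℕ) : ℝ) • P) (Q ^ k) := (mvDiffOp_smul_left _ _ _).symm
      have hstep : mvDiffOp (((m + 1 : ℕ) : ℝ) • P) (Q ^ k)
          = ∑ i : Fin n, pderiv i (mvDiffOp (pderiv i P) (Q ^ k)) := by
        rw [show (((m + 1 : ℕ) : ℝ) • P) = ∑ i : Fin n, X i * pderiv i P from heuler.symm,
          mvDiffOp_sum]
        exact Finset.sum_congr rfl fun i _ => mvDiffOp_X_mul i _ _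
      have hIH : ∀ i : Fin n, mvDiffOp (pderiv i P) (Q ^ k)
          = Ck m k • (pderiv i P * Q ^ (k - m)) :=
        fun i => ih (pderiv i P) (harmonic_pderiv hharm i) (isHomogeneous_pderiv hhom i)
      have hderiv : ∀ i : Fin n, pderiv i (pderiv i P * Q ^ (k - m))
          = pderiv i (pderiv i P) * Q ^ (k - m)
            + ((k - m : ℕ) : ℝ) • (2 * (X i * pderiv i P) * Q ^ (k - (m + 1))) := by
        intro i
        rw [pderiv_mul, pderiv_pow, hQ, pderiv_Q, ← hQ]
        congr 1
        rw [show k - m - 1 = k - (m + 1) from by omega, smul_eq_C_mul]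
        rw [show ((k - m : ℕ) : MvPolynomial (Fin n) ℝ) = C ((k - m : ℕ) : ℝ) from
          (map_natCast (C : ℝ →+* MvPolynomial (Fin n) ℝ) (k - m)).symm]
        ring
      have hsum : ∑ i : Fin n, pderiv i (mvDiffOp (pderiv i P) (Q ^ k))
          = Ck m k • (((k - m : ℕ) : ℝ) • (2 * (((m + 1 : ℕ) : ℝ) • P) * Q ^ (k - (m + 1)))) := by
        simp only [hIH, Derivation.map_smul, hderiv]
        rw [← Finset.smul_sum]
        congr 1
        rw [Finset.sum_add_distrib, ← Finset.sum_mul, hharm, zero_mul, zero_add, ← Finset.smul_sum]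
        refine congrArg _ ?_
        rw [← Finset.sum_mul, ← Finset.mul_sum, heuler]
      have key : ((m + 1 : ℕ) : ℝ) • mvDiffOp P (Q ^ k)
          = ((m + 1 : ℕ) : ℝ) • ((2 * ((k - m : ℕ) : ℝ) * Ck m k) • (P * Q ^ (k - (m + 1)))) := by
        rw [hsmul, hstep, hsum]
        rw [show 2 * (((m+1:ℕ):ℝ) • P) * Q ^ (k - (m+1))
            = ((m+1:ℕ):ℝ) • (2 * (P * Q ^ (k-(m+1)))) from by
          rw [smul_eq_C_mul, smul_eq_C_mul]; ring]
        rw [show (2 : MvPolynomial (Fin n) ℝ) * (P * Q ^ (k - (m+1)))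
            = (2:ℝ) • (P * Q ^ (k - (m+1))) from by
          rw [smul_eq_C_mul, map_ofNat]]
        rw [smul_smul, smul_smul, smul_smul, smul_smul]
        congr 1
        ring
      have hne : ((m + 1 : ℕ) : ℝ) ≠ 0 := by positivity
      have hfin : mvDiffOp P (Q ^ k)
          = (2 * ((k - m : ℕ) : ℝ) * Ck m k) • (P * Q ^ (k - (m + 1))) := by
        calc mvDiffOp P (Q ^ k)
            = ((m+1:ℕ):ℝ)⁻¹ • (((m+1:ℕ):ℝ) • mvDiffOp P (Q ^ k)) := by
              rw [smul_smul, inv_mul_cancel₀ hne, one_smul]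
          _ = _ := by rw [key, smul_smul, inv_mul_cancel₀ hne, one_smul]
      rw [hfin, Ck_succ]


/-- Let `P` be a harmonic polynomial on `ℝⁿ`, homogeneous of degree `2j`,
`j ≥ 1`, and let `f(x) = |x|^{2k}`. If `2j ≤ k` then
`(P(∂)f)(x) = 2^{2j} (k!/(k−2j)!) P(x) |x|^{2(k−2j)}` for all `x`; if `2j > k` then
`P(∂)f = 0`. -/
theorem statement4 (n : ℕ) (j k : ℕ) (hj : 1 ≤ j) (P : MvPolynomial (Fin n) ℝ)
    (hharm : ∑ i : Fin n, pderiv i (pderiv i P) = 0)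
    (hhom : P.IsHomogeneous (2 * j)) :
    (2 * j ≤ k →
      ∀ x : Fin n → ℝ,
        eval x (mvDiffOp P ((∑ i : Fin n, X i ^ 2) ^ k))
          = 2 ^ (2 * j) * ((Nat.factorial k : ℝ) / (Nat.factorial (k - 2 * j) : ℝ)) *
              eval x P * (∑ i : Fin n, x i ^ 2) ^ (k - 2 * j)) ∧
    (2 * j > k → mvDiffOp P ((∑ i : Fin n, X i ^ 2) ^ k) = 0) := by
  have hmain := main_lemma k (2 * j) P hharm hhom
  constructor
  · intro hle x
    rw [hmain]
    unfold Ck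
    rw [if_pos hle, smul_eq_C_mul, map_mul, map_mul, eval_C, map_pow, map_sum]
    simp only [map_pow, eval_X]
    ring
  · intro hgt
    rw [hmain]
    unfold Ck
    rw [if_neg (by omega), zero_smul]
end

section
/- Let n ≥ 2 and let σ be the normalized surface measure on the unit sphere S^{n−1} ⊂ ℝⁿ (so σ(S^{n−1}) = 1). There exists a constant C depending only on n such that for every integer q ≥ 1 and every polynomial Q on ℝⁿ homogeneous of degree q, sup_{x ∈ S^{n−1}} |Q(x)| ≤ C · q^{(n−1)/2} · (∫_{S^{n−1}} Q(x)² dσ(x))^{1/2}. -/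
open MeasureTheory Metric

/-- The normalized (rotation-invariant probability) surface measure on the unit sphere
of `ℝⁿ`. -/
noncomputable def sphereProbMeasure (n : ℕ) :
    Measure (sphere (0 : EuclideanSpace ℝ (Fin n)) 1) :=
  ((volume : Measure (EuclideanSpace ℝ (Fin n))).toSphere Set.univ)⁻¹ •
    (volume : Measure (EuclideanSpace ℝ (Fin n))).toSphere

open MvPolynomial Pointwise
open scoped RealInnerProductSpace

lemma toSphere_univ_ne_zero (n : ℕ) (hn : 1 ≤ n) :
    (volume : Measure (EuclideanSpace ℝ (Fin n))).toSphere Set.univ ≠ 0 := by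
  rw [Measure.toSphere_apply_univ]
  refine mul_ne_zero ?_ ?_
  · simp [finrank_euclideanSpace]
    omega
  · exact (measure_ball_pos _ _ one_pos).ne'

lemma toSphere_univ_ne_top (n : ℕ) :
    (volume : Measure (EuclideanSpace ℝ (Fin n))).toSphere Set.univ ≠ ⊤ :=
  measure_ne_top _ _

lemma sphereProbMeasure_isProb (n : ℕ) (hn : 1 ≤ n) :
    IsProbabilityMeasure (sphereProbMeasure n) := by
  constructor
  rw [sphereProbMeasure, Measure.smul_apply, smul_eq_mul,
    ENNReal.inv_mul_cancel (toSphere_univ_ne_zero n hn) (toSphere_univ_ne_top n)]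

lemma exists_isometry_map {E : Type*} [NormedAddCommGroup E] [InnerProductSpace ℝ E]
    [FiniteDimensional ℝ E] (x y : E) (h : ‖x‖ = ‖y‖) :
    ∃ g : E ≃ₗᵢ[ℝ] E, g x = y := by
  rcases eq_or_ne x y with rfl | hxy
  · exact ⟨LinearIsometryEquiv.refl ℝ E, rfl⟩
  · refine ⟨(ℝ ∙ (x - y))ᗮ.reflection, ?_⟩
    rw [Submodule.reflection_orthogonal_apply, Submodule.reflection_singleton_apply]
    have hxy0 : x - y ≠ 0 := sub_ne_zero.2 hxy
    have hnorm : ‖x - y‖ ^ 2 = 2 * ⟪x - y, x⟫ := by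
      rw [inner_sub_left, norm_sub_sq_real, real_inner_self_eq_norm_sq, h,
        real_inner_comm y x]
      ring
    have hpos : (0:ℝ) < ‖x - y‖ ^ 2 := pow_pos (norm_pos_iff.2 hxy0) 2
    have hc : ⟪x - y, x⟫ / ‖x - y‖ ^ 2 + ⟪x - y, x⟫ / ‖x - y‖ ^ 2 = 1 := by
      rw [← add_div, ← two_mul, ← hnorm, div_self hpos.ne']
    have h2 : (2 : ℕ) • ((⟪x - y, x⟫ / ((‖x - y‖ : ℝ) ^ 2)) • (x - y)) = x - y := by
      rw [two_smul, ← add_smul, hc, one_smul]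
    simp only [RCLike.ofReal_real_eq_id, id_eq]
    rw [h2]
    abel

section SphereMap

variable {n : ℕ}

lemma mem_sphere_of_isometry (g : EuclideanSpace ℝ (Fin n) ≃ₗᵢ[ℝ] EuclideanSpace ℝ (Fin n))
    (y : sphere (0 : EuclideanSpace ℝ (Fin n)) 1) :
    g (y : EuclideanSpace ℝ (Fin n)) ∈ sphere (0 : EuclideanSpace ℝ (Fin n)) 1 := by
  have := y.2
  simp only [mem_sphere_iff_norm, sub_zero] at this ⊢
  simp [this]

/-- The homeomorphism of the unit sphere induced by a linear isometry equivalence. -/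
noncomputable def sphereMap (g : EuclideanSpace ℝ (Fin n) ≃ₗᵢ[ℝ] EuclideanSpace ℝ (Fin n)) :
    sphere (0 : EuclideanSpace ℝ (Fin n)) 1 ≃ₜ sphere (0 : EuclideanSpace ℝ (Fin n)) 1 :=
{ toFun := fun y => ⟨g y, mem_sphere_of_isometry g y⟩
  invFun := fun y => ⟨g.symm y, mem_sphere_of_isometry g.symm y⟩
  left_inv := fun y => by ext : 1; simp
  right_inv := fun y => by ext : 1; simp
  continuous_toFun := Continuous.subtype_mk (g.continuous.comp continuous_subtype_val) _
  continuous_invFun := Continuous.subtype_mk (g.symm.continuous.comp continuous_subtype_val) _ }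

lemma sphereMap_apply (g : EuclideanSpace ℝ (Fin n) ≃ₗᵢ[ℝ] EuclideanSpace ℝ (Fin n))
    (y : sphere (0 : EuclideanSpace ℝ (Fin n)) 1) :
    (sphereMap g y : EuclideanSpace ℝ (Fin n)) = g y := rfl

lemma image_smul_linear (g : EuclideanSpace ℝ (Fin n) ≃ₗᵢ[ℝ] EuclideanSpace ℝ (Fin n))
    (A : Set (EuclideanSpace ℝ (Fin n))) :
    (Set.Ioo (0:ℝ) 1) • (g '' A) = g '' ((Set.Ioo (0:ℝ) 1) • A) := by
  ext z
  constructor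
  · rintro ⟨r, hr, a, ⟨b, hb, rfl⟩, rfl⟩
    exact ⟨r • b, ⟨r, hr, b, hb, rfl⟩, (g.map_smul r b)⟩
  · rintro ⟨c, ⟨r, hr, b, hb, rfl⟩, rfl⟩
    exact ⟨r, hr, g b, ⟨b, hb, rfl⟩, (g.map_smul r b).symm⟩

lemma coe_image_preimage (g : EuclideanSpace ℝ (Fin n) ≃ₗᵢ[ℝ] EuclideanSpace ℝ (Fin n))
    (s : Set (sphere (0 : EuclideanSpace ℝ (Fin n)) 1)) :
    ((↑) '' ((sphereMap g) ⁻¹' s) : Set (EuclideanSpace ℝ (Fin n)))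
      = g.symm '' ((↑) '' s) := by
  ext z
  constructor
  · rintro ⟨y, hy, rfl⟩
    exact ⟨sphereMap g y, ⟨sphereMap g y, hy, rfl⟩, by simp [sphereMap_apply]⟩
  · rintro ⟨c, ⟨v, hv, rfl⟩, rfl⟩
    refine ⟨sphereMap g.symm v, ?_, rfl⟩
    have h : sphereMap g (sphereMap g.symm v) = v := by
      ext : 1; simp [sphereMap_apply]
    show sphereMap g (sphereMap g.symm v) ∈ s
    rw [h]; exact hv

lemma map_toSphere (g : EuclideanSpace ℝ (Fin n) ≃ₗᵢ[ℝ] EuclideanSpace ℝ (Fin n)) :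
    Measure.map (sphereMap g) (volume : Measure (EuclideanSpace ℝ (Fin n))).toSphere
      = (volume : Measure (EuclideanSpace ℝ (Fin n))).toSphere := by
  refine Measure.ext fun s hs => ?_
  rw [Measure.map_apply (sphereMap g).continuous.measurable hs,
    Measure.toSphere_apply' _ (hs.preimage (sphereMap g).continuous.measurable),
    Measure.toSphere_apply' _ hs, coe_image_preimage, image_smul_linear]
  congr 1
  have h1 : (g.symm '' ((Set.Ioo (0:ℝ) 1) • ((↑) '' s))
      : Set (EuclideanSpace ℝ (Fin n))) = g ⁻¹' ((Set.Ioo (0:ℝ) 1) • ((↑) '' s)) := by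
    ext z
    constructor
    · rintro ⟨c, hc, rfl⟩; simpa using hc
    · intro hz; exact ⟨g z, hz, by simp⟩
  rw [h1]
  exact g.measurePreserving.measure_preimage_emb g.toHomeomorph.measurableEmbedding _

lemma measurePreserving_sphereMap (g : EuclideanSpace ℝ (Fin n) ≃ₗᵢ[ℝ] EuclideanSpace ℝ (Fin n)) :
    MeasurePreserving (sphereMap g) (sphereProbMeasure n) (sphereProbMeasure n) := by
  refine ⟨(sphereMap g).continuous.measurable, ?_⟩
  rw [sphereProbMeasure, Measure.map_smul, map_toSphere]

lemma integral_comp_sphereMap (g : EuclideanSpace ℝ (Fin n) ≃ₗᵢ[ℝ] EuclideanSpace ℝ (Fin n))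
    (f : sphere (0 : EuclideanSpace ℝ (Fin n)) 1 → ℝ) :
    ∫ y, f (sphereMap g y) ∂(sphereProbMeasure n) = ∫ y, f y ∂(sphereProbMeasure n) :=
  (measurePreserving_sphereMap g).integral_comp (sphereMap g).measurableEmbedding f

end SphereMap


-- `sphereMap` commutes with `symm`.
lemma sphereMap_symm_eq {n : ℕ} (g : EuclideanSpace ℝ (Fin n) ≃ₗᵢ[ℝ] EuclideanSpace ℝ (Fin n)) :
    ⇑(sphereMap g).symm = ⇑(sphereMap g.symm) := rfl

section FullSupport
variable {n : ℕ}

lemma norm_coe_sphere (y : sphere (0 : EuclideanSpace ℝ (Fin n)) 1) :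
    ‖(y : EuclideanSpace ℝ (Fin n))‖ = 1 := by
  have := y.2
  simpa [mem_sphere_iff_norm] using this

lemma measure_open_pos (hn : 1 ≤ n) {U : Set (sphere (0 : EuclideanSpace ℝ (Fin n)) 1)}
    (hU : IsOpen U) {u₀ : sphere (0 : EuclideanSpace ℝ (Fin n)) 1} (hu₀ : u₀ ∈ U) :
    0 < sphereProbMeasure n U := by
  haveI := sphereProbMeasure_isProb n hn
  by_contra hpos
  push_neg at hpos
  have hU0 : sphereProbMeasure n U = 0 := le_antisymm hpos (zero_le)
  have hiso : ∀ y : sphere (0 : EuclideanSpace ℝ (Fin n)) 1,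
      ∃ g : EuclideanSpace ℝ (Fin n) ≃ₗᵢ[ℝ] EuclideanSpace ℝ (Fin n),
        g (u₀ : EuclideanSpace ℝ (Fin n)) = (y : EuclideanSpace ℝ (Fin n)) := fun y =>
    exists_isometry_map _ _ (by rw [norm_coe_sphere, norm_coe_sphere])
  choose g hg using hiso
  set V : sphere (0 : EuclideanSpace ℝ (Fin n)) 1 → Set (sphere (0 : EuclideanSpace ℝ (Fin n)) 1) :=
    fun y => (sphereMap (g y)) '' U with hV
  have hVopen : ∀ y, IsOpen (V y) := fun y => (sphereMap (g y)).isOpen_image.2 hU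
  have hVmem : ∀ y, y ∈ V y := fun y => ⟨u₀, hu₀, by
    ext : 1
    rw [sphereMap_apply, hg]⟩
  have hVnull : ∀ y, sphereProbMeasure n (V y) = 0 := by
    intro y
    have himg : V y = (sphereMap (g y)).symm ⁻¹' U := by
      rw [hV]
      exact ((sphereMap (g y)).toEquiv.image_eq_preimage_symm U)
    rw [himg, sphereMap_symm_eq,
      (measurePreserving_sphereMap _).measure_preimage hU.measurableSet.nullMeasurableSet]
    exact hU0
  have hcover : (Set.univ : Set (sphere (0 : EuclideanSpace ℝ (Fin n)) 1)) ⊆ ⋃ y, V y :=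
    fun y _ => Set.mem_iUnion.2 ⟨y, hVmem y⟩
  obtain ⟨t, ht⟩ := isCompact_univ.elim_finite_subcover V hVopen hcover
  have h1 : (1 : ENNReal) = sphereProbMeasure n Set.univ := (measure_univ).symm
  have : sphereProbMeasure n Set.univ ≤ ∑ y ∈ t, sphereProbMeasure n (V y) :=
    le_trans (measure_mono ht) (measure_biUnion_finset_le t V)
  simp only [hVnull, Finset.sum_const_zero] at this
  rw [← h1] at this
  exact one_ne_zero (le_antisymm this (zero_le))

lemma eq_on_sphere_of_ae_eq (hn : 1 ≤ n) {f h : sphere (0 : EuclideanSpace ℝ (Fin n)) 1 → ℝ}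
    (hf : Continuous f) (hh : Continuous h) (hae : f =ᵐ[sphereProbMeasure n] h) :
    ∀ x, f x = h x := by
  intro x
  by_contra hx
  set U : Set (sphere (0 : EuclideanSpace ℝ (Fin n)) 1) := {z | f z ≠ h z} with hUdef
  have hUopen : IsOpen U := isOpen_ne_fun hf hh
  have hpos := measure_open_pos hn hUopen (by simpa [hUdef] using hx)
  have : sphereProbMeasure n U = 0 := hae
  rw [this] at hpos
  exact lt_irrefl _ hpos

end FullSupport

section Poly
variable {n : ℕ}

/-- Composition of a polynomial with a linear isometry, as polynomial substitution. -/
noncomputable def polyComp (g : EuclideanSpace ℝ (Fin n) ≃ₗᵢ[ℝ] EuclideanSpace ℝ (Fin n))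
    (Q : MvPolynomial (Fin n) ℝ) : MvPolynomial (Fin n) ℝ :=
  aeval (fun i => ∑ j, C ((g (EuclideanSpace.single j 1)) i) * X j) Q

lemma coord_isometry (g : EuclideanSpace ℝ (Fin n) ≃ₗᵢ[ℝ] EuclideanSpace ℝ (Fin n))
    (x : EuclideanSpace ℝ (Fin n)) (i : Fin n) :
    (g x) i = ∑ j, (g (EuclideanSpace.single j 1)) i * x j := by
  have hx : x = ∑ j, x j • EuclideanSpace.single j (1:ℝ) := by
    have := (EuclideanSpace.basisFun (Fin n) ℝ).sum_repr x
    simp only [EuclideanSpace.basisFun_repr, EuclideanSpace.basisFun_apply] at this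
    exact this.symm
  conv_lhs => rw [hx]
  rw [map_sum]
  have : (∑ j, g (x j • EuclideanSpace.single j (1:ℝ))) i
      = ∑ j, (g (x j • EuclideanSpace.single j (1:ℝ))) i := by
    simp [WithLp.ofLp_sum]
  rw [this]
  refine Finset.sum_congr rfl fun j _ => ?_
  rw [_root_.map_smul, PiLp.smul_apply]
  simp [mul_comm]

lemma eval_polyComp (g : EuclideanSpace ℝ (Fin n) ≃ₗᵢ[ℝ] EuclideanSpace ℝ (Fin n))
    (Q : MvPolynomial (Fin n) ℝ) (x : EuclideanSpace ℝ (Fin n)) :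
    eval (fun i => x i) (polyComp g Q) = eval (fun i => (g x) i) Q := by
  have haee : ∀ (f : Fin n → ℝ) (p : MvPolynomial (Fin n) ℝ), aeval f p = eval f p := by
    intro f p
    rw [← coe_aeval_eq_eval]
    rfl
  have hfun : (fun i => aeval (fun k : Fin n => x k)
      (∑ j, C ((g (EuclideanSpace.single j 1)) i) * X j)) = fun i => (g x) i := by
    funext i
    rw [map_sum]
    simp only [map_mul, aeval_C, aeval_X]
    rw [coord_isometry]
    simp
  rw [polyComp, ← haee, comp_aeval_apply, hfun, haee]

lemma polyComp_isHomogeneous (g : EuclideanSpace ℝ (Fin n) ≃ₗᵢ[ℝ] EuclideanSpace ℝ (Fin n))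
    {Q : MvPolynomial (Fin n) ℝ} {q : ℕ} (hQ : Q.IsHomogeneous q) :
    (polyComp g Q).IsHomogeneous q := by
  have := hQ.aeval (fun i => ∑ j, C ((g (EuclideanSpace.single j 1)) i) * X j) (n := 1) ?_
  · simpa [polyComp] using this
  · intro i
    exact IsHomogeneous.sum _ _ _ fun j _ => isHomogeneous_C_mul_X _ _

end Poly

abbrev DegIdx (n q : ℕ) := {α : Fin n →₀ ℕ // α.degree = q}

noncomputable instance fintypeDegIdx (n q : ℕ) : Fintype (DegIdx n q) := by
  apply Fintype.ofInjective (fun α : DegIdx n q => fun i : Fin n => (⟨α.1 i, by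
    have h1 := Finsupp.le_degree i α.1
    rw [α.2] at h1
    omega⟩ : Fin (q+1)))
  intro α β h
  ext j
  simpa using congr_arg Fin.val (congrFun h j)

lemma sum_univ_of_degree (α : Fin n →₀ ℕ) : (∑ k, α k) = α.degree := by
  rw [Finsupp.degree]
  exact (Finset.sum_subset (Finset.subset_univ _) (by
    intro x _ hx
    simpa using Finsupp.notMem_support_iff.mp hx)).symm

lemma card_DegIdx_le (hn : 1 ≤ n) : Fintype.card (DegIdx n q) ≤ (q+1)^(n-1) := by
  have hlt : n - 1 < n := by omega
  classical
  have hbd : ∀ (α : DegIdx n q) (j : Fin n), α.1 j < q + 1 := by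
    intro α j
    have h1 := Finsupp.le_degree j α.1
    rw [α.2] at h1
    omega
  have hinj : Function.Injective (fun α : DegIdx n q => fun i : Fin (n-1) =>
      (⟨α.1 ⟨i.1, lt_trans i.2 hlt⟩, hbd α _⟩ : Fin (q+1))) := by
    intro α β h
    have hcoord : ∀ j : Fin n, j.1 ≠ n - 1 → α.1 j = β.1 j := by
      intro j hj
      have hj' : j.1 < n - 1 := by omega
      have := congr_arg Fin.val (congrFun h ⟨j.1, hj'⟩)
      simpa [Fin.ext_iff] using this
    have hsum : (∑ k, α.1 k) = ∑ k, β.1 k := by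
      rw [sum_univ_of_degree, sum_univ_of_degree, α.2, β.2]
    set j0 : Fin n := ⟨n-1, hlt⟩ with hj0
    have hmem : j0 ∈ (Finset.univ : Finset (Fin n)) := Finset.mem_univ _
    rw [← Finset.add_sum_erase _ _ hmem, ← Finset.add_sum_erase _ _ hmem] at hsum
    have herase : ∑ k ∈ Finset.univ.erase j0, α.1 k = ∑ k ∈ Finset.univ.erase j0, β.1 k := by
      refine Finset.sum_congr rfl fun k hk => ?_
      have hk' : k ≠ j0 := (Finset.mem_erase.mp hk).1
      refine hcoord k fun hkv => hk' (Fin.ext hkv)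
    have hj0eq : α.1 j0 = β.1 j0 := by omega
    ext j
    rcases eq_or_ne j.1 (n-1) with hj | hj
    · have : j = j0 := Fin.ext hj
      rw [this, hj0eq]
    · exact hcoord j hj
  calc Fintype.card (DegIdx n q) ≤ Fintype.card (Fin (n-1) → Fin (q+1)) :=
        Fintype.card_le_of_injective _ hinj
    _ = (q+1)^(n-1) := by simp

-- linear injection of homogeneous polys into coefficient functions
noncomputable def coeffMap (n q : ℕ) :
    (homogeneousSubmodule (Fin n) ℝ q) →ₗ[ℝ] (DegIdx n q → ℝ) where
  toFun P := fun α => coeff α.1 P.1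
  map_add' P R := by funext α; simp
  map_smul' c P := by funext α; simp

lemma coeffMap_injective (n q : ℕ) : Function.Injective (coeffMap n q) := by
  intro P R h
  ext d : 2
  rcases eq_or_ne d.degree q with hd | hd
  · exact congrFun h ⟨d, hd⟩
  · rw [(mem_homogeneousSubmodule _ _).mp P.2 |>.coeff_eq_zero hd,
      (mem_homogeneousSubmodule _ _).mp R.2 |>.coeff_eq_zero hd]

noncomputable instance (n q : ℕ) : FiniteDimensional ℝ (homogeneousSubmodule (Fin n) ℝ q) :=
  Module.Finite.of_injective (coeffMap n q) (coeffMap_injective n q)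

lemma finrank_homog_le (hn : 1 ≤ n) :
    Module.finrank ℝ (homogeneousSubmodule (Fin n) ℝ q) ≤ (q+1)^(n-1) := by
  calc Module.finrank ℝ (homogeneousSubmodule (Fin n) ℝ q)
      ≤ Module.finrank ℝ (DegIdx n q → ℝ) :=
        LinearMap.finrank_le_finrank_of_injective (coeffMap_injective n q)
    _ = Fintype.card (DegIdx n q) := Module.finrank_fintype_fun_eq_card ℝ
    _ ≤ (q+1)^(n-1) := card_DegIdx_le hn

set_option maxHeartbeats 4000000 in
private lemma key (n : ℕ) (hn : 1 ≤ n) (q : ℕ) (Q : MvPolynomial (Fin n) ℝ) (hQ : Q.IsHomogeneous q)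
    (x : sphere (0 : EuclideanSpace ℝ (Fin n)) 1) :
    (eval (fun i => (x : EuclideanSpace ℝ (Fin n)) i) Q)^2
      ≤ (((q+1)^(n-1) : ℕ) : ℝ) * ∫ y : sphere (0 : EuclideanSpace ℝ (Fin n)) 1,
          (eval (fun i => (y : EuclideanSpace ℝ (Fin n)) i) Q)^2 ∂(sphereProbMeasure n) := by
  classical
  haveI hprob := sphereProbMeasure_isProb n hn
  set μ := sphereProbMeasure n with hμ
  set fS : MvPolynomial (Fin n) ℝ → (sphere (0 : EuclideanSpace ℝ (Fin n)) 1) → ℝ :=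
    fun P y => eval (fun i => (y : EuclideanSpace ℝ (Fin n)) i) P with hfS
  have hcont : ∀ P, Continuous (fS P) := by
    intro P
    have h1 : Continuous fun v : Fin n → ℝ => eval v P := MvPolynomial.continuous_eval (p := P)
    have h2 : Continuous fun y : sphere (0 : EuclideanSpace ℝ (Fin n)) 1 =>
        (fun i => (y : EuclideanSpace ℝ (Fin n)) i) := by
      refine continuous_pi fun i => ?_
      exact (EuclideanSpace.proj i).continuous.comp continuous_subtype_val
    exact h1.comp h2
  have hmem : ∀ P, MemLp (fS P) 2 μ := by
    intro P
    obtain ⟨C, hC⟩ := isCompact_univ.exists_bound_of_continuousOn (hcont P).continuousOn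
    exact MemLp.of_bound (hcont P).aestronglyMeasurable C
      (Filter.Eventually.of_forall fun z => hC z trivial)
  set W := homogeneousSubmodule (Fin n) ℝ q with hW
  set T : W →ₗ[ℝ] (Lp ℝ 2 μ) :=
    { toFun := fun P => (hmem P.1).toLp (fS P.1)
      map_add' := by
        intro P R
        rw [← MemLp.toLp_add (hmem P.1) (hmem R.1)]
        exact (MemLp.toLp_eq_toLp_iff _ _).2 (Filter.Eventually.of_forall fun z => by
          simp [hfS])
      map_smul' := by
        intro c P
        simp only [RingHom.id_apply]
        rw [← MemLp.toLp_const_smul c (hmem P.1)]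
        exact (MemLp.toLp_eq_toLp_iff _ _).2 (Filter.Eventually.of_forall fun z => by
          simp [hfS, MvPolynomial.smul_eval]) } with hT
  have hinner : ∀ P R : W, ⟪T P, T R⟫ = ∫ y, fS P.1 y * fS R.1 y ∂μ := by
    intro P R
    rw [L2.inner_def]
    refine integral_congr_ae ?_
    filter_upwards [MemLp.coeFn_toLp (hmem P.1), MemLp.coeFn_toLp (hmem R.1)] with z h1 h2
    show ⟪(T P : Lp ℝ 2 μ) z, (T R : Lp ℝ 2 μ) z⟫ = fS P.1 z * fS R.1 z
    have e1 : (T P : Lp ℝ 2 μ) z = fS P.1 z := h1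
    have e2 : (T R : Lp ℝ 2 μ) z = fS R.1 z := h2
    rw [e1, e2]
    simp [RCLike.inner_apply, mul_comm]
  have hnorm2 : ∀ P : W, ‖T P‖^2 = ∫ y, (fS P.1 y)^2 ∂μ := by
    intro P
    rw [← real_inner_self_eq_norm_sq, hinner P P]
    simp_rw [pow_two]
  set V := LinearMap.range T with hV
  haveI hfd : FiniteDimensional ℝ V := inferInstance
  set d := Module.finrank ℝ V with hd
  set b := stdOrthonormalBasis ℝ V with hb
  have hbi : ∀ i : Fin d, ∃ P : W, T P = ((b i : V) : Lp ℝ 2 μ) := fun i =>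
    LinearMap.mem_range.1 (b i).2
  choose Pv hPv using hbi
  set K : (sphere (0 : EuclideanSpace ℝ (Fin n)) 1) → ℝ :=
    fun z => ∑ i, (fS (Pv i).1 z)^2 with hK
  have hKnonneg : ∀ z, 0 ≤ K z := fun z => Finset.sum_nonneg fun i _ => sq_nonneg _
  -- representation lemma
  have hrep : ∀ (P : W) (c : Fin d → ℝ), T P = ∑ i, c i • ((b i : V) : Lp ℝ 2 μ) →
      ∀ z, fS P.1 z = ∑ i, c i * fS (Pv i).1 z := by
    intro P c hTP z
    have hR : T (∑ i, c i • Pv i) = T P := by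
      rw [map_sum, hTP]
      exact Finset.sum_congr rfl fun i _ => by rw [LinearMap.map_smul, hPv]
    have hae : fS P.1 =ᵐ[μ] fS (∑ i, c i • Pv i).1 := by
      have h2 := hR
      rw [show T (∑ i, c i • Pv i) = (hmem _).toLp (fS (∑ i, c i • Pv i).1) from rfl,
          show T P = (hmem _).toLp (fS P.1) from rfl] at h2
      exact ((MemLp.toLp_eq_toLp_iff _ _).1 h2).symm
    have heq := eq_on_sphere_of_ae_eq hn (hcont _) (hcont _) hae
    rw [heq z]
    simp [hfS, MvPolynomial.smul_eval]
  -- pointwise bound via Cauchy-Schwarz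
  have hpoint : ∀ (P : W) (z : sphere (0 : EuclideanSpace ℝ (Fin n)) 1),
      (fS P.1 z)^2 ≤ K z * ‖T P‖^2 := by
    intro P z
    have hmemV : T P ∈ V := LinearMap.mem_range_self _ _
    set v : V := ⟨T P, hmemV⟩ with hv
    have hcoe : T P = ∑ i, b.repr v i • ((b i : V) : Lp ℝ 2 μ) := by
      have h3 := congrArg (V.subtype) (b.sum_repr v)
      simpa [map_sum] using h3.symm
    have hzz := hrep P (fun i => b.repr v i) hcoe z
    have hreprnorm : ∑ i, (b.repr v i)^2 = ‖T P‖^2 := by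
      have h4 : ‖T P‖ = ‖v‖ := (Submodule.coe_norm v).symm
      have h5 : ‖v‖ = ‖b.repr v‖ := (b.repr.norm_map v).symm
      rw [h4, h5, EuclideanSpace.norm_eq, Real.sq_sqrt
        (Finset.sum_nonneg fun i _ => sq_nonneg _)]
      simp [Real.norm_eq_abs, sq_abs]
    rw [hzz]
    calc (∑ i, b.repr v i * fS (Pv i).1 z)^2
        ≤ (∑ i, (b.repr v i)^2) * (∑ i, (fS (Pv i).1 z)^2) :=
          Finset.sum_mul_sq_le_sq_mul_sq _ _ _
      _ = K z * ‖T P‖^2 := by rw [hreprnorm, mul_comm]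
  -- K decreases along isometries
  have hKmono : ∀ (g : EuclideanSpace ℝ (Fin n) ≃ₗᵢ[ℝ] EuclideanSpace ℝ (Fin n))
      (z : sphere (0 : EuclideanSpace ℝ (Fin n)) 1), K (sphereMap g z) ≤ K z := by
    intro g z
    have hQich : ∀ i : Fin d, ∃ Qi : W, ∀ w : sphere (0 : EuclideanSpace ℝ (Fin n)) 1,
        fS Qi.1 w = fS (Pv i).1 (sphereMap g w) := by
      intro i
      refine ⟨⟨polyComp g (Pv i).1, (mem_homogeneousSubmodule _ _).2 (polyComp_isHomogeneous g
        ((mem_homogeneousSubmodule _ _).1 (Pv i).2))⟩, fun w => ?_⟩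
      show eval (fun k => (w : EuclideanSpace ℝ (Fin n)) k) (polyComp g (Pv i).1)
        = eval (fun k => ((sphereMap g w : sphere (0 : EuclideanSpace ℝ (Fin n)) 1)
            : EuclideanSpace ℝ (Fin n)) k) (Pv i).1
      rw [eval_polyComp, sphereMap_apply]
    choose Qi hfQi using hQich
    have hTQi : ∀ i j : Fin d, ⟪T (Qi i), T (Qi j)⟫ = if i = j then (1:ℝ) else 0 := by
      intro i j
      rw [hinner]
      have hch : ∫ y, fS (Qi i).1 y * fS (Qi j).1 y ∂μ
          = ∫ y, fS (Pv i).1 y * fS (Pv j).1 y ∂μ := by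
        calc ∫ y, fS (Qi i).1 y * fS (Qi j).1 y ∂μ
            = ∫ y, (fun w => fS (Pv i).1 w * fS (Pv j).1 w) (sphereMap g y) ∂μ := by
              refine integral_congr_ae (Filter.Eventually.of_forall fun y => ?_)
              simp only [hfQi]
          _ = ∫ y, fS (Pv i).1 y * fS (Pv j).1 y ∂μ := by
              rw [hμ]
              exact integral_comp_sphereMap g (fun w => fS (Pv i).1 w * fS (Pv j).1 w)
      rw [hch, ← hinner, hPv, hPv, ← Submodule.coe_inner]
      exact orthonormal_iff_ite.1 b.orthonormal i j
    set s := ∑ i, (fS (Qi i).1 z)^2 with hs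
    have hKg : K (sphereMap g z) = s := by
      refine Finset.sum_congr rfl fun i _ => ?_
      rw [hfQi]
    rw [hKg]
    rcases eq_or_lt_of_le (Finset.sum_nonneg fun (i : Fin d) _ =>
        sq_nonneg (fS (Qi i).1 z)) with hzero | hspos
    · exact le_trans (le_of_eq hzero.symm) (hKnonneg z)
    · set P0 : W := ∑ i, (fS (Qi i).1 z) • Qi i with hP0
      have hfP0 : fS P0.1 z = s := by
        simp [hP0, hfS, MvPolynomial.smul_eval, hs, pow_two]
      have hnormP0 : ‖T P0‖^2 = s := by
        rw [← real_inner_self_eq_norm_sq, hP0, map_sum]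
        have hTsmul : ∀ i : Fin d, T ((fS (Qi i).1 z) • Qi i) = (fS (Qi i).1 z) • T (Qi i) :=
          fun i => LinearMap.map_smul _ _ _
        simp_rw [hTsmul]
        rw [sum_inner]
        have : ∀ i ∈ Finset.univ, ⟪(fS (Qi i).1 z) • T (Qi i),
            ∑ j, (fS (Qi j).1 z) • T (Qi j)⟫ = (fS (Qi i).1 z)^2 := by
          intro i _
          rw [inner_smul_left, inner_sum]
          have : ∀ j ∈ Finset.univ, ⟪T (Qi i), (fS (Qi j).1 z) • T (Qi j)⟫
              = if i = j then fS (Qi i).1 z else 0 := by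
            intro j _
            rw [inner_smul_right, hTQi]
            by_cases hij : i = j <;> simp [hij]
          rw [Finset.sum_congr rfl this]
          simp [pow_two]
        rw [Finset.sum_congr rfl this]
      have hb0 := hpoint P0 z
      rw [hfP0, hnormP0] at hb0
      exact le_of_mul_le_mul_right (by nlinarith) hspos
  -- K is constant
  have hKconst : ∀ z : sphere (0 : EuclideanSpace ℝ (Fin n)) 1, K z = K x := by
    intro z
    obtain ⟨g, hg⟩ := exists_isometry_map (z : EuclideanSpace ℝ (Fin n))
      (x : EuclideanSpace ℝ (Fin n)) (by rw [norm_coe_sphere, norm_coe_sphere])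
    obtain ⟨g', hg'⟩ := exists_isometry_map (x : EuclideanSpace ℝ (Fin n))
      (z : EuclideanSpace ℝ (Fin n)) (by rw [norm_coe_sphere, norm_coe_sphere])
    have h1 : sphereMap g z = x := Subtype.ext (by rw [sphereMap_apply, hg])
    have h2 : sphereMap g' x = z := Subtype.ext (by rw [sphereMap_apply, hg'])
    have ha := hKmono g z; rw [h1] at ha
    have hb' := hKmono g' x; rw [h2] at hb'
    linarith
  -- integral of K
  have hintK : ∫ z, K z ∂μ = d := by
    rw [hK]
    rw [integral_finset_sum _ (fun i _ => (hmem (Pv i).1).integrable_sq)]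
    have hone : ∀ i : Fin d, ∫ z, (fS (Pv i).1 z)^2 ∂μ = 1 := by
      intro i
      rw [← hnorm2 (Pv i), hPv]
      have : ‖((b i : V) : Lp ℝ 2 μ)‖ = 1 := by
        rw [← Submodule.coe_norm]
        exact b.orthonormal.1 i
      rw [this, one_pow]
    rw [Finset.sum_congr rfl (fun i _ => hone i)]
    simp
  have hKx : K x = d := by
    have hc : ∫ z, K z ∂μ = K x := by
      rw [integral_congr_ae (Filter.Eventually.of_forall hKconst)]
      simp [integral_const, measure_univ]
    rw [← hc, hintK]
  -- conclude
  have hfinal := hpoint ⟨Q, (mem_homogeneousSubmodule _ _).2 hQ⟩ x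
  rw [hKx, hnorm2] at hfinal
  refine le_trans hfinal ?_
  have hd_le : (d : ℝ) ≤ (((q+1)^(n-1) : ℕ) : ℝ) := by
    have h6 : d ≤ Module.finrank ℝ W := LinearMap.finrank_range_le T
    have h7 := finrank_homog_le (q := q) hn
    exact_mod_cast le_trans h6 h7
  have hIntNonneg : 0 ≤ ∫ y, (fS Q y)^2 ∂μ := integral_nonneg fun z => sq_nonneg _
  exact mul_le_mul_of_nonneg_right hd_le hIntNonneg

/-- There is a constant `C` depending only on `n ≥ 2` such that for every
integer `q ≥ 1` and every homogeneous polynomial `Q` of degree `q` on `ℝⁿ`,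
`sup_{S^{n-1}} |Q| ≤ C q^{(n−1)/2} (∫_{S^{n-1}} Q² dσ)^{1/2}`, `σ` being the normalized
surface measure on the unit sphere. -/
theorem statement6 (n : ℕ) (hn : 2 ≤ n) :
    ∃ C : ℝ, 0 < C ∧ ∀ (q : ℕ), 1 ≤ q → ∀ Q : MvPolynomial (Fin n) ℝ, Q.IsHomogeneous q →
      ∀ x ∈ sphere (0 : EuclideanSpace ℝ (Fin n)) 1,
        |MvPolynomial.eval (fun i => x i) Q|
          ≤ C * (q : ℝ) ^ (((n : ℝ) - 1) / 2) *
            Real.sqrt (∫ y : sphere (0 : EuclideanSpace ℝ (Fin n)) 1,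
              (MvPolynomial.eval (fun i => (y : EuclideanSpace ℝ (Fin n)) i) Q) ^ 2
                ∂(sphereProbMeasure n)) := by
  refine ⟨2 ^ (((n:ℝ)-1)/2), by positivity, ?_⟩
  intro q hq Q hQ x hx
  have hkey := key n (by omega) q Q hQ ⟨x, hx⟩
  set I := ∫ y : sphere (0 : EuclideanSpace ℝ (Fin n)) 1,
      (MvPolynomial.eval (fun i => (y : EuclideanSpace ℝ (Fin n)) i) Q) ^ 2
        ∂(sphereProbMeasure n) with hI
  have hI0 : (0:ℝ) ≤ I := integral_nonneg fun y => sq_nonneg _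
  have h1 : |MvPolynomial.eval (fun i => x i) Q|
      ≤ Real.sqrt ((((q+1)^(n-1):ℕ):ℝ) * I) := by
    rw [← Real.sqrt_sq_eq_abs]
    exact Real.sqrt_le_sqrt hkey
  refine le_trans h1 ?_
  rw [Real.sqrt_mul (by positivity) I, mul_assoc]
  rw [show (2:ℝ) ^ (((n:ℝ)-1)/2) * ((q:ℝ) ^ (((n:ℝ)-1)/2) * Real.sqrt I)
    = (2 ^ (((n:ℝ)-1)/2) * (q:ℝ) ^ (((n:ℝ)-1)/2)) * Real.sqrt I from by ring]
  refine mul_le_mul_of_nonneg_right ?_ (Real.sqrt_nonneg I)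
  have hA : (((q+1)^(n-1):ℕ):ℝ) ≤ ((2*(q:ℝ)))^(n-1) := by
    push_cast
    refine pow_le_pow_left₀ (by positivity) ?_ _
    have : (1:ℝ) ≤ (q:ℝ) := by exact_mod_cast hq
    linarith
  have hcast : ((n-1:ℕ):ℝ) = (n:ℝ)-1 := by
    have h1n : (1:ℕ) ≤ n := by omega
    push_cast [h1n]
    ring
  calc Real.sqrt (((q+1)^(n-1):ℕ):ℝ) ≤ Real.sqrt ((2*(q:ℝ))^(n-1)) := Real.sqrt_le_sqrt hA
    _ = (2*(q:ℝ)) ^ (((n:ℝ)-1)/2) := by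
        rw [Real.sqrt_eq_rpow, ← Real.rpow_natCast (2*(q:ℝ)) (n-1),
          ← Real.rpow_mul (by positivity), hcast]
        norm_num
        ring_nf
    _ = 2 ^ (((n:ℝ)-1)/2) * (q:ℝ) ^ (((n:ℝ)-1)/2) := by
        rw [Real.mul_rpow (by norm_num) (by positivity)]
end

section
/- Let n ≥ 1 and let f : ℝⁿ → ℝ be a continuous function which changes sign, that is, there exist points a, b ∈ ℝⁿ with f(a) > 0 and f(b) < 0. Then the zero set Z(f) = {x ∈ ℝⁿ : f(x) = 0} has positive (n−1)-dimensional Hausdorff measure: H^{n−1}(Z(f)) > 0. In particular, the Hausdorff dimension of Z(f) is at least n−1. -/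
set_option maxHeartbeats 1000000


open MeasureTheory

/-- If `n ≥ 1` and `f : ℝⁿ → ℝ` is continuous and changes sign, then its zero
set has positive `(n−1)`-dimensional Hausdorff measure. -/
theorem statement9 (n : ℕ) (hn : 1 ≤ n) (f : EuclideanSpace ℝ (Fin n) → ℝ)
    (hf : Continuous f) (a b : EuclideanSpace ℝ (Fin n)) (ha : 0 < f a) (hb : f b < 0) :
    0 < μH[(n : ℝ) - 1] {x : EuclideanSpace ℝ (Fin n) | f x = 0} := by
  classical
  set Z : Set (EuclideanSpace ℝ (Fin n)) := {x | f x = 0} with hZ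
  set e : EuclideanSpace ℝ (Fin n) := b - a with he
  have hab : a ≠ b := by intro h; rw [h] at ha; linarith
  have he0 : e ≠ 0 := sub_ne_zero.2 (Ne.symm hab)
  set K : Submodule ℝ (EuclideanSpace ℝ (Fin n)) := (ℝ ∙ e)ᗮ with hK
  set P := K.orthogonalProjectionOnto with hP
  -- dimension of K is n - 1
  have hdimE : Module.finrank ℝ (EuclideanSpace ℝ (Fin n)) = n := by simp
  have hdim1 : Module.finrank ℝ (ℝ ∙ e) = 1 := finrank_span_singleton he0
  have hdimK : Module.finrank ℝ K = n - 1 := by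
    have h := Submodule.finrank_add_finrank_orthogonal (K := ℝ ∙ e)
    rw [hdim1, hdimE] at h
    rw [hK]
    omega
  have hcast : ((Module.finrank ℝ K : ℝ)) = (n : ℝ) - 1 := by
    rw [hdimK, Nat.cast_sub hn, Nat.cast_one]
  have hd : (0 : ℝ) ≤ (n : ℝ) - 1 := by
    have : (1 : ℝ) ≤ (n : ℝ) := by exact_mod_cast hn
    linarith
  -- find ε > 0 such that f > 0 on ball a ε and f < 0 on ball b ε
  obtain ⟨εa, hεa, hfa⟩ : ∃ ε > 0, ∀ x ∈ Metric.ball a ε, 0 < f x := by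
    have : IsOpen (f ⁻¹' Set.Ioi 0) := isOpen_Ioi.preimage hf
    obtain ⟨ε, hε, hball⟩ := Metric.isOpen_iff.1 this a ha
    exact ⟨ε, hε, fun x hx => hball hx⟩
  obtain ⟨εb, hεb, hfb⟩ : ∃ ε > 0, ∀ x ∈ Metric.ball b ε, f x < 0 := by
    have : IsOpen (f ⁻¹' Set.Iio 0) := isOpen_Iio.preimage hf
    obtain ⟨ε, hε, hball⟩ := Metric.isOpen_iff.1 this b hb
    exact ⟨ε, hε, fun x hx => hball hx⟩
  set ε := min εa εb with hε
  have hεpos : 0 < ε := lt_min hεa hεb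
  -- the ball in K around P a is contained in P '' Z
  have hball : Metric.ball (P a) ε ⊆ P '' Z := by
    intro w hw
    set v : EuclideanSpace ℝ (Fin n) := ((w - P a : K) : EuclideanSpace ℝ (Fin n)) with hv
    have hvnorm : ‖v‖ < ε := by
      have : ‖v‖ = dist w (P a) := by
        rw [dist_eq_norm]
        simp [hv]
      rw [this]; exact Metric.mem_ball.1 hw
    have hfav : 0 < f (a + v) := by
      apply hfa
      simp only [Metric.mem_ball, dist_eq_norm, add_sub_cancel_left]
      exact hvnorm.trans_le (min_le_left _ _)
    have hfbv : f (b + v) < 0 := by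
      apply hfb
      simp only [Metric.mem_ball, dist_eq_norm, add_sub_cancel_left]
      exact hvnorm.trans_le (min_le_right _ _)
    -- intermediate value theorem along the segment
    set g : ℝ → ℝ := fun t => f (a + v + t • e) with hg
    have hgc : Continuous g := by
      apply hf.comp
      continuity
    have hg0 : 0 < g 0 := by simpa [hg] using hfav
    have hg1 : g 1 < 0 := by
      have hbv : a + v + e = b + v := by
        rw [he]; abel
      simpa [hg, hbv] using hfbv
    have : (0 : ℝ) ∈ Set.Icc (g 1) (g 0) := ⟨hg1.le, hg0.le⟩
    obtain ⟨t, ht, hgt⟩ :=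
      intermediate_value_Icc' (by norm_num : (0:ℝ) ≤ 1) hgc.continuousOn this
    refine ⟨a + v + t • e, hgt, ?_⟩
    have hPe : P e = 0 :=
      Submodule.orthogonalProjectionOnto_apply_of_mem_orthogonal
        (Submodule.le_orthogonal_orthogonal (ℝ ∙ e) (Submodule.mem_span_singleton_self e))
    have hPv : P v = w - P a := Submodule.orthogonalProjectionOnto_mem_subspace_eq_self (w - P a)
    rw [map_add, map_add, P.map_smul, hPe, hPv, smul_zero, add_zero]
    abel
  -- P is 1-Lipschitz
  have hPlip : LipschitzWith 1 (P : EuclideanSpace ℝ (Fin n) → K) := by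
    refine (P.lipschitz).weaken ?_
    have := Submodule.orthogonalProjectionOnto_norm_le K
    exact_mod_cast this
  -- positivity of the Hausdorff measure of the ball in K
  have hballpos : 0 < μH[(n : ℝ) - 1] (Metric.ball (P a) ε) := by
    rw [← hcast]
    exact Metric.measure_ball_pos _ _ hεpos
  have h1 : 0 < μH[(n : ℝ) - 1] (P '' Z) :=
    hballpos.trans_le (measure_mono hball)
  have h2 : μH[(n : ℝ) - 1] (P '' Z) ≤ 1 * μH[(n : ℝ) - 1] Z := by
    have := hPlip.hausdorffMeasure_image_le hd Z
    simpa using this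
  rw [one_mul] at h2
  exact h1.trans_le h2
end

section
/- For every real number a and all integers N ≥ 1 and 0 ≤ L ≤ 2N−1, Σ_{i=L}^{2N−1} (−1)^i · binom(a, i) · binom(i, L) = (−1)^L · binom(a, L) · binom(2N−1−a, 2N−1−L). -/
/-- Generalized binomial coefficient `binom(x, r) = x(x-1)⋯(x-r+1)/r!` for a real
number `x` and a natural number `r`. -/
noncomputable def rbinom (x : ℝ) (r : ℕ) : ℝ :=
  (∏ i ∈ Finset.range r, (x - i)) / (Nat.factorial r)

lemma rbinom_zero (x : ℝ) : rbinom x 0 = 1 := by simp [rbinom]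

lemma rbinom_succ' (x : ℝ) (r : ℕ) :
    rbinom x (r+1) = x / (r+1) * rbinom (x-1) r := by
  rw [rbinom, rbinom, Finset.prod_range_succ', Nat.factorial_succ]
  have : ∀ i ∈ Finset.range r, (x - ((i:ℝ)+1)) = (x - 1 - i) := by intro i _; ring
  push_cast
  rw [Finset.prod_congr rfl this]
  have hr : ((r:ℝ)+1) ≠ 0 := by positivity
  have hf : (Nat.factorial r:ℝ) ≠ 0 := by positivity
  field_simp
  ring

lemma rbinom_succ (x : ℝ) (r : ℕ) :
    rbinom x (r+1) = rbinom x r * (x - r) / (r+1) := by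
  rw [rbinom, rbinom, Finset.prod_range_succ, Nat.factorial_succ]
  push_cast
  rw [div_mul_eq_mul_div, div_div, mul_comm ((r:ℝ)+1)]

lemma rbinom_pascal (x : ℝ) (r : ℕ) :
    rbinom x (r+1) = rbinom (x-1) (r+1) + rbinom (x-1) r := by
  rw [rbinom_succ', rbinom_succ (x-1)]
  have hr : ((r:ℝ)+1) ≠ 0 := by positivity
  field_simp
  ring

lemma rbinom_alt_sum (x : ℝ) (m : ℕ) :
    ∑ j ∈ Finset.range (m+1), (-1:ℝ)^j * rbinom x j = (-1:ℝ)^m * rbinom (x-1) m := by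
  induction m with
  | zero => simp [rbinom_zero]
  | succ m ih =>
      rw [Finset.sum_range_succ, ih, rbinom_pascal x m]
      ring

lemma rbinom_reflect (x : ℝ) (m : ℕ) :
    rbinom ((m:ℝ) - x) m = (-1:ℝ)^m * rbinom (x-1) m := by
  rw [rbinom, rbinom]
  rw [← Finset.prod_range_reflect (fun i => x - 1 - (i:ℝ)) m]
  have : ∀ i ∈ Finset.range m, ((m:ℝ) - x - i) = -(x - 1 - ((m - 1 - i : ℕ):ℝ)) := by
    intro i hi
    rw [Finset.mem_range] at hi
    have h1 : 1 + i ≤ m := by omega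
    have : ((m - 1 - i : ℕ):ℝ) = (m:ℝ) - 1 - i := by
      have h2 : m - 1 - i = m - (1 + i) := by omega
      rw [h2, Nat.cast_sub h1]
      push_cast; ring
    rw [this]; ring
  rw [Finset.prod_congr rfl this]
  have h2 : ∀ i ∈ Finset.range m, -(x - 1 - ((m - 1 - i : ℕ):ℝ)) = (-1) * (x - 1 - ((m - 1 - i : ℕ):ℝ)) := by
    intro i _; ring
  rw [Finset.prod_congr rfl h2, Finset.prod_mul_distrib, Finset.prod_const, Finset.card_range]
  ring

lemma rbinom_absorb (a : ℝ) (L j : ℕ) :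
    rbinom a (L + j) * (Nat.choose (L + j) L : ℝ) = rbinom a L * rbinom (a - L) j := by
  rw [rbinom, rbinom, rbinom, Finset.prod_range_add]
  have h : ∀ i ∈ Finset.range j, (a - ((L + i : ℕ):ℝ)) = (a - L - i) := by
    intro i _; push_cast; ring
  rw [Finset.prod_congr rfl h]
  have key : (Nat.choose (L+j) L : ℝ) * (Nat.factorial L) * (Nat.factorial j) = Nat.factorial (L+j) := by
    norm_cast
    have := Nat.choose_mul_factorial_mul_factorial (Nat.le_add_right L j)
    simpa using this
  have hf1 : (Nat.factorial L:ℝ) ≠ 0 := by positivity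
  have hf2 : (Nat.factorial j:ℝ) ≠ 0 := by positivity
  have hf3 : (Nat.factorial (L+j):ℝ) ≠ 0 := by positivity
  field_simp
  rw [← key]
  ring

/-- For every real number `a` and all integers `N ≥ 1` and `0 ≤ L ≤ 2N−1`,
`Σ_{i=L}^{2N−1} (−1)^i · binom(a, i) · binom(i, L)
  = (−1)^L · binom(a, L) · binom(2N−1−a, 2N−1−L)`. -/
theorem statement13 (a : ℝ) (N L : ℕ) (hN : 1 ≤ N) (hL : L ≤ 2 * N - 1) :
    ∑ i ∈ Finset.Icc L (2 * N - 1), (-1 : ℝ) ^ i * rbinom a i * (Nat.choose i L : ℝ)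
      = (-1 : ℝ) ^ L * rbinom a L * rbinom (2 * N - 1 - a) (2 * N - 1 - L) := by
  have h2N : 1 ≤ 2 * N := by omega
  set m := 2 * N - 1 - L with hm
  rw [← Finset.Ico_add_one_right_eq_Icc, Finset.sum_Ico_eq_sum_range]
  have hrange : 2 * N - 1 + 1 - L = m + 1 := by omega
  rw [hrange]
  have hterm : ∀ j ∈ Finset.range (m+1),
      (-1:ℝ)^(L+j) * rbinom a (L+j) * (Nat.choose (L+j) L : ℝ)
        = ((-1:ℝ)^L * rbinom a L) * ((-1:ℝ)^j * rbinom (a - L) j) := by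
    intro j _
    rw [pow_add]
    linear_combination ((-1:ℝ)^L * (-1:ℝ)^j) * rbinom_absorb a L j
  rw [Finset.sum_congr rfl hterm, ← Finset.mul_sum, rbinom_alt_sum]
  have hmr : (m:ℝ) = 2*(N:ℝ) - 1 - L := by
    rw [hm, Nat.cast_sub hL, Nat.cast_sub h2N]; push_cast; ring
  have hrefl := rbinom_reflect (a - L) m
  rw [hmr] at hrefl
  have hc : 2*(N:ℝ) - 1 - (L:ℝ) - (a - L) = 2*(N:ℝ) - 1 - a := by ring
  rw [hc] at hrefl
  rw [← hrefl]
end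

section
/- Let N ≥ 1 and 0 ≤ L ≤ 2N−1 be integers and let m be a real number with m > N − L. Then Σ_{i=L}^{2N−1} (Γ(i−N+m)/i!) · binom(i, L) = (Γ(L−N+m)/L!) · binom(N+m−1, 2N−1−L). -/
lemma prod_reidx (L K : ℕ) (h : L ≤ K) (a : ℝ) :
    ∏ t ∈ Finset.range (K - L), ((K:ℝ) + a - t)
      = ∏ j ∈ Finset.Ico (L+1) (K+1), ((j:ℝ) + a) := by
  rw [Finset.prod_Ico_eq_prod_range]
  have hn : K + 1 - (L + 1) = K - L := by omega
  rw [hn]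
  push_cast
  rw [← Finset.prod_range_reflect (fun t => ((L:ℝ) + 1 + t + a)) (K - L)]
  refine Finset.prod_congr rfl fun t ht => ?_
  simp only [Finset.mem_range] at ht
  have h1 : ((K - L - 1 - t : ℕ) : ℝ) = (K:ℝ) - L - 1 - t := by
    have h2 : K - L - 1 - t = K - (L + 1 + t) := by omega
    rw [h2, Nat.cast_sub (by omega)]; push_cast; ring
  simp only [h1]
  ring

lemma scalar_id (L K : ℕ) (h : L ≤ K) (a : ℝ) :
    1 / (((K - L).factorial : ℝ) * L.factorial)
      + ((L:ℝ) + a) * ((K+1).choose L : ℝ) / ((K+1).factorial : ℝ)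
      = ((K:ℝ) + 1 + a) / (((K + 1 - L).factorial : ℝ) * L.factorial) := by
  have hC : ((K+1).choose L : ℝ) * (L.factorial * (K+1-L).factorial) = ((K+1).factorial : ℝ) := by
    have := Nat.choose_mul_factorial_mul_factorial (by omega : L ≤ K+1)
    push_cast [← this]; ring
  have hfs : (K + 1 - L) = (K - L) + 1 := by omega
  have hfac : (((K+1-L).factorial : ℕ) : ℝ) = ((K:ℝ) + 1 - L) * (K-L).factorial := by
    rw [hfs, Nat.factorial_succ]
    push_cast [Nat.cast_sub h]; ring
  have h1 : ((K-L).factorial : ℝ) ≠ 0 := Nat.cast_ne_zero.2 (Nat.factorial_ne_zero _)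
  have h2 : (L.factorial : ℝ) ≠ 0 := Nat.cast_ne_zero.2 (Nat.factorial_ne_zero _)
  have h3 : (((K+1).factorial : ℕ) : ℝ) ≠ 0 := Nat.cast_ne_zero.2 (Nat.factorial_ne_zero _)
  have h4 : ((K:ℝ) + 1 - L) ≠ 0 := by
    have : (L:ℝ) ≤ K := Nat.cast_le.2 h
    intro hc; nlinarith
  rw [hfac] at hC ⊢
  field_simp
  linear_combination ((L:ℝ)+a) * hC

lemma sum_id (L : ℕ) (a : ℝ) : ∀ K, L ≤ K →
    ∑ i ∈ Finset.Icc L K,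
        (∏ j ∈ Finset.Ico L i, ((j:ℝ) + a)) * (Nat.choose i L : ℝ) / (i.factorial : ℝ)
      = rbinom ((K:ℝ) + a) (K - L) / (L.factorial : ℝ) := by
  refine Nat.le_induction ?_ ?_
  · simp [rbinom, Nat.sub_self]
  · intro K hK ih
    rw [Finset.sum_Icc_succ_top (by omega : L ≤ K + 1), ih]
    have h2 : L ≤ K + 1 := by omega
    set R : ℝ := ∏ j ∈ Finset.Ico (L+1) (K+1), ((j:ℝ) + a) with hR
    have e1 : rbinom ((K:ℝ) + a) (K - L) = R / ((K-L).factorial : ℝ) := by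
      rw [rbinom, prod_reidx L K hK a]
    have e2 : (∏ j ∈ Finset.Ico L (K+1), ((j:ℝ) + a)) = ((L:ℝ) + a) * R := by
      rw [Finset.prod_eq_prod_Ico_succ_bot (by omega : L < K + 1)]
    have e3 : rbinom (((K+1:ℕ):ℝ) + a) ((K+1) - L) = ((K:ℝ) + 1 + a) * R / ((K+1-L).factorial : ℝ) := by
      rw [rbinom]
      have : ∏ t ∈ Finset.range (K + 1 - L), (((K+1:ℕ):ℝ) + a - t)
          = ∏ j ∈ Finset.Ico (L+1) (K+1+1), ((j:ℝ) + a) := by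
        have := prod_reidx L (K+1) h2 a
        push_cast at this ⊢
        exact this
      rw [this, Finset.prod_Ico_succ_top (by omega : L + 1 ≤ K + 1), ← hR]
      push_cast
      ring
    rw [e1, e2, e3]
    have key := scalar_id L K hK a
    linear_combination R * key

lemma gamma_prod (L : ℕ) (a : ℝ) (ha : 0 < (L:ℝ) + a) : ∀ i, L ≤ i →
    Real.Gamma ((i:ℝ) + a) = Real.Gamma ((L:ℝ) + a) * ∏ j ∈ Finset.Ico L i, ((j:ℝ) + a) := by
  refine Nat.le_induction ?_ ?_
  · simp
  · intro n hn ih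
    have hne : (n:ℝ) + a ≠ 0 := by
      have h2 : (L:ℝ) ≤ n := Nat.cast_le.2 hn
      linarith
    have : ((n+1:ℕ):ℝ) + a = ((n:ℝ) + a) + 1 := by push_cast; ring
    rw [this, Real.Gamma_add_one hne, ih, Finset.prod_Ico_succ_top hn]
    ring

/-- Let `N ≥ 1` and `0 ≤ L ≤ 2N−1` be integers and let `m` be a real number
with `m > N − L`. Then `Σ_{i=L}^{2N−1} (Γ(i−N+m)/i!) · binom(i, L)
  = (Γ(L−N+m)/L!) · binom(N+m−1, 2N−1−L)`. -/
theorem statement14 (N L : ℕ) (hN : 1 ≤ N) (hL : L ≤ 2 * N - 1) (m : ℝ)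
    (hm : m > (N : ℝ) - L) :
    ∑ i ∈ Finset.Icc L (2 * N - 1),
        (Real.Gamma ((i : ℝ) - N + m) / (Nat.factorial i : ℝ)) * (Nat.choose i L : ℝ)
      = (Real.Gamma ((L : ℝ) - N + m) / (Nat.factorial L : ℝ)) *
          rbinom ((N : ℝ) + m - 1) (2 * N - 1 - L) := by

  set a : ℝ := m - N with ha
  have haL : 0 < (L:ℝ) + a := by rw [ha]; linarith
  have hcast : ((2*N-1:ℕ):ℝ) = 2*(N:ℝ) - 1 := by
    push_cast [Nat.cast_sub (by omega : 1 ≤ 2*N)]; ring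
  have hsum := sum_id L a (2*N-1) hL
  have step1 : ∑ i ∈ Finset.Icc L (2 * N - 1),
        (Real.Gamma ((i : ℝ) - N + m) / (Nat.factorial i : ℝ)) * (Nat.choose i L : ℝ)
      = Real.Gamma ((L:ℝ) + a) * ∑ i ∈ Finset.Icc L (2 * N - 1),
        (∏ j ∈ Finset.Ico L i, ((j:ℝ) + a)) * (Nat.choose i L : ℝ) / (i.factorial : ℝ) := by
    rw [Finset.mul_sum]
    refine Finset.sum_congr rfl fun i hi => ?_
    have hi' : L ≤ i := (Finset.mem_Icc.1 hi).1
    rw [show (i:ℝ) - N + m = (i:ℝ) + a by rw [ha]; ring, gamma_prod L a haL i hi']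
    ring
  rw [step1, hsum]
  have e1 : ((2*N-1:ℕ):ℝ) + a = (N:ℝ) + m - 1 := by rw [hcast, ha]; ring
  have e2 : (L:ℝ) - N + m = (L:ℝ) + a := by rw [ha]; ring
  rw [e1, e2]
  ring
end

section
/- Let m > 0 be a real number and let N ≥ 2 and 1 ≤ j ≤ N−1 be integers. Then Σ_{i=0}^{N−1−j} (−1)^i · binom(i+N+j−1+m, N−j) · binom(m+2j+i−1, i) / ((i+j+m) · (N−i−j−1)! · ∏_{k=0}^{i}(m+2j+i−k)) = binom(N−1, j−1) · Γ(j+m)/(j · Γ(N+m)). -/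
open Finset

lemma pascalSplit (n : ℕ) (f : ℕ → ℝ) :
    ∑ i ∈ range (n + 2), ((n + 1).choose i : ℝ) * f i
      = ∑ i ∈ range (n + 1), (n.choose i : ℝ) * f i
        + ∑ i ∈ range (n + 1), (n.choose i : ℝ) * f (i + 1) := by
  rw [Finset.sum_range_succ' (fun i => ((n + 1).choose i : ℝ) * f i) (n + 1)]
  simp only [Nat.choose_succ_succ', Nat.cast_add, add_mul, Nat.choose_zero_right, Nat.cast_one,
    one_mul]
  rw [Finset.sum_add_distrib,
    Finset.sum_range_succ (fun i => (n.choose (i + 1) : ℝ) * f (i + 1)) n,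
    Finset.sum_range_succ' (fun i => (n.choose i : ℝ) * f i) n]
  simp [Nat.choose_succ_self]
  ring

lemma gammaProd (a : ℝ) (ha : 0 < a) (M : ℕ) :
    Real.Gamma (a + M) = Real.Gamma a * ∏ k ∈ range M, (a + k) := by
  induction M with
  | zero => simp
  | succ M ih =>
    have h : a + ((M : ℕ) + 1 : ℕ) = (a + M) + 1 := by push_cast; ring
    rw [h, Real.Gamma_add_one (by positivity), ih, Finset.prod_range_succ]
    ring

lemma prodFact (j n : ℕ) :
    ∏ t ∈ range n, ((j : ℝ) + t + 1) = ((j + n).factorial : ℝ) / (j.factorial : ℝ) := by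
  induction n with
  | zero => simp [Nat.cast_ne_zero.mpr j.factorial_ne_zero]
  | succ n ih =>
    rw [Finset.prod_range_succ, ih]
    have : (j + (n + 1)).factorial = (j + n).factorial * (j + n + 1) := by
      rw [show j + (n + 1) = (j + n) + 1 by ring, Nat.factorial_succ]; ring
    rw [this]
    have hf : (j.factorial : ℝ) ≠ 0 := Nat.cast_ne_zero.mpr j.factorial_ne_zero
    field_simp
    push_cast; ring


lemma keyF (n : ℕ) : ∀ a c : ℝ, 0 < a →
    ∑ i ∈ range (n + 1),
        (-1 : ℝ) ^ i * (n.choose i : ℝ) * (∏ t ∈ range n, ((i : ℝ) + c + t + 1)) / ((i : ℝ) + a)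
      = (∏ t ∈ range n, (c + t + 1 - a)) * (n.factorial : ℝ) / ∏ k ∈ range (n + 1), (a + k) := by
  induction n with
  | zero => intro a c ha; simp
  | succ n ih =>
    intro a c ha
    have ha1 : (0 : ℝ) < a + 1 := by linarith
    have hstep :
        ∑ i ∈ range (n + 2),
            (-1 : ℝ) ^ i * ((n + 1).choose i : ℝ) *
              (∏ t ∈ range (n + 1), ((i : ℝ) + c + t + 1)) / ((i : ℝ) + a)
          = ∑ i ∈ range (n + 2), ((n + 1).choose i : ℝ) *
              ((-1 : ℝ) ^ i * (∏ t ∈ range (n + 1), ((i : ℝ) + c + t + 1)) / ((i : ℝ) + a)) := by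
      apply Finset.sum_congr rfl; intro i _; ring
    rw [hstep, pascalSplit n (fun i =>
      (-1 : ℝ) ^ i * (∏ t ∈ range (n + 1), ((i : ℝ) + c + t + 1)) / ((i : ℝ) + a))]
    have h1 : ∑ i ∈ range (n + 1), (n.choose i : ℝ) *
          ((-1 : ℝ) ^ i * (∏ t ∈ range (n + 1), ((i : ℝ) + c + t + 1)) / ((i : ℝ) + a))
        = (∑ i ∈ range (n + 1), (-1 : ℝ) ^ i * (n.choose i : ℝ) *
              ∏ t ∈ range n, ((i : ℝ) + (c + 1) + t + 1))
          + (c + 1 - a) * ∑ i ∈ range (n + 1),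
              (-1 : ℝ) ^ i * (n.choose i : ℝ) *
                (∏ t ∈ range n, ((i : ℝ) + (c + 1) + t + 1)) / ((i : ℝ) + a) := by
      rw [Finset.mul_sum, ← Finset.sum_add_distrib]
      apply Finset.sum_congr rfl
      intro i hi
      have hia : ((i : ℝ) + a) ≠ 0 := by positivity
      have hp : (∏ t ∈ range (n + 1), ((i : ℝ) + c + t + 1))
          = (∏ t ∈ range n, ((i : ℝ) + (c + 1) + t + 1)) * ((i : ℝ) + c + 1) := by
        rw [Finset.prod_range_succ' (fun t => (i : ℝ) + c + t + 1) n]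
        congr 1
        · apply Finset.prod_congr rfl; intro t _; push_cast; ring
        · push_cast; ring
      rw [hp]
      field_simp
      ring
    have h2 : ∑ i ∈ range (n + 1), (n.choose i : ℝ) *
          ((-1 : ℝ) ^ (i + 1) * (∏ t ∈ range (n + 1), (((i + 1 : ℕ) : ℝ) + c + t + 1)) /
            (((i + 1 : ℕ) : ℝ) + a))
        = -((∑ i ∈ range (n + 1), (-1 : ℝ) ^ i * (n.choose i : ℝ) *
                ∏ t ∈ range n, ((i : ℝ) + (c + 1) + t + 1))
            + (c + (n : ℝ) + 1 - a) * ∑ i ∈ range (n + 1),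
                (-1 : ℝ) ^ i * (n.choose i : ℝ) *
                  (∏ t ∈ range n, ((i : ℝ) + (c + 1) + t + 1)) / ((i : ℝ) + (a + 1))) := by
      rw [Finset.mul_sum, ← Finset.sum_add_distrib, ← Finset.sum_neg_distrib]
      apply Finset.sum_congr rfl
      intro i hi
      have hia : ((i : ℝ) + (a + 1)) ≠ 0 := by positivity
      have hp : (∏ t ∈ range (n + 1), (((i + 1 : ℕ) : ℝ) + c + t + 1))
          = (∏ t ∈ range n, ((i : ℝ) + (c + 1) + t + 1)) * ((i : ℝ) + c + (n : ℝ) + 2) := by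
        rw [Finset.prod_range_succ (fun t => ((i + 1 : ℕ) : ℝ) + c + t + 1) n]
        congr 1
        · apply Finset.prod_congr rfl; intro t _; push_cast; ring
        · push_cast; ring
      rw [hp]
      have hcast : (((i + 1 : ℕ) : ℝ) + a) = (i : ℝ) + (a + 1) := by push_cast; ring
      rw [hcast]
      field_simp
      ring
    rw [h1, h2, ih a (c + 1) ha, ih (a + 1) (c + 1) ha1]
    -- final algebra
    have hD : (0 : ℝ) < ∏ k ∈ range (n + 1), (a + k) := by
      apply Finset.prod_pos; intro k _; positivity
    have hD' : (0 : ℝ) < ∏ k ∈ range (n + 1), (a + 1 + k) := by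
      apply Finset.prod_pos; intro k _; positivity
    have hE1 : ∏ t ∈ range (n + 1), (c + t + 1 - a)
        = (c + 1 - a) * ∏ t ∈ range n, (c + 1 + t + 1 - a) := by
      rw [Finset.prod_range_succ' (fun t => c + t + 1 - a) n, mul_comm]
      congr 1
      · push_cast; ring
      · apply Finset.prod_congr rfl; intro t _; push_cast; ring
    have hP2 : ∏ t ∈ range n, (c + 1 + t + 1 - (a + 1)) = ∏ t ∈ range n, (c + t + 1 - a) := by
      apply Finset.prod_congr rfl; intro t _; ring
    have hE2 : ∏ t ∈ range (n + 1), (c + t + 1 - a)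
        = (∏ t ∈ range n, (c + t + 1 - a)) * (c + (n : ℝ) + 1 - a) :=
      Finset.prod_range_succ _ n
    have hEP' : (c + 1 - a) * (∏ t ∈ range n, (c + 1 + t + 1 - a))
        = (∏ t ∈ range n, (c + t + 1 - a)) * (c + (n : ℝ) + 1 - a) :=
      hE1.symm.trans hE2
    have hB : ∏ k ∈ range (n + 2), (a + k)
        = (∏ k ∈ range (n + 1), (a + 1 + k)) * a := by
      rw [Finset.prod_range_succ' (fun k => a + k) (n + 1)]
      congr 1
      · apply Finset.prod_congr rfl; intro k _; push_cast; ring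
      · push_cast; ring
    have hA : ∏ k ∈ range (n + 2), (a + k)
        = (∏ k ∈ range (n + 1), (a + k)) * (a + (n : ℝ) + 1) := by
      rw [Finset.prod_range_succ]; push_cast; ring
    have hrel : (∏ k ∈ range (n + 1), (a + 1 + k)) * a
        = (∏ k ∈ range (n + 1), (a + k)) * (a + (n : ℝ) + 1) := hB.symm.trans hA
    have hfac : (((n + 1).factorial : ℕ) : ℝ) = ((n : ℝ) + 1) * (n.factorial : ℝ) := by
      push_cast [Nat.factorial_succ]; ring
    rw [hP2, hE1, hA, hfac]
    have hap : ((∏ k ∈ range (n + 1), (a + k)) * (a + (n : ℝ) + 1)) ≠ 0 := by positivity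
    have e2 : (c + (n : ℝ) + 1 - a) *
          ((∏ t ∈ range n, (c + t + 1 - a)) * (n.factorial : ℝ) /
            ∏ k ∈ range (n + 1), (a + 1 + k))
        = (c + 1 - a) * (∏ t ∈ range n, (c + 1 + t + 1 - a)) * (n.factorial : ℝ) * a /
            ((∏ k ∈ range (n + 1), (a + k)) * (a + (n : ℝ) + 1)) := by
      rw [← hrel,
        show (c + (n : ℝ) + 1 - a) *
            ((∏ t ∈ range n, (c + t + 1 - a)) * (n.factorial : ℝ) /
              ∏ k ∈ range (n + 1), (a + 1 + k))
          = ((∏ t ∈ range n, (c + t + 1 - a)) * (c + (n : ℝ) + 1 - a)) * (n.factorial : ℝ) /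
              ∏ k ∈ range (n + 1), (a + 1 + k) from by ring, ← hEP']
      field_simp
    rw [e2]
    field_simp
    ring


/-- Let `m > 0` be a real number and let `N ≥ 2` and `1 ≤ j ≤ N−1` be integers.
Then `Σ_{i=0}^{N−1−j} (−1)^i · binom(i+N+j−1+m, N−j) · binom(m+2j+i−1, i) /
  ((i+j+m) · (N−i−j−1)! · ∏_{k=0}^{i}(m+2j+i−k))
  = binom(N−1, j−1) · Γ(j+m)/(j · Γ(N+m))`. -/
theorem statement16 (m : ℝ) (hm : 0 < m) (N j : ℕ) (hN : 2 ≤ N) (hj1 : 1 ≤ j)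
    (hj2 : j ≤ N - 1) :
    ∑ i ∈ Finset.Icc 0 (N - 1 - j),
        (-1 : ℝ) ^ i * rbinom ((i : ℝ) + N + j - 1 + m) (N - j) *
          rbinom (m + 2 * j + i - 1) i /
            (((i : ℝ) + j + m) * (Nat.factorial (N - i - j - 1) : ℝ) *
              ∏ k ∈ Finset.range (i + 1), (m + 2 * j + i - k))
      = (Nat.choose (N - 1) (j - 1) : ℝ) * Real.Gamma ((j : ℝ) + m) /
          ((j : ℝ) * Real.Gamma ((N : ℝ) + m)) := by
  have hjN : j + 1 ≤ N := by omega
  obtain ⟨n, rfl⟩ := Nat.exists_eq_add_of_le hjN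
  have hIcc : Finset.Icc 0 (j + 1 + n - 1 - j) = Finset.range (n + 1) := by
    have h : j + 1 + n - 1 - j = n := by omega
    rw [h]; ext x; simp [Nat.lt_succ_iff]
  rw [hIcc]
  have hterm : ∀ i ∈ Finset.range (n + 1),
      (-1 : ℝ) ^ i * rbinom ((i : ℝ) + (j + 1 + n : ℕ) + j - 1 + m) ((j + 1 + n) - j) *
          rbinom (m + 2 * j + i - 1) i /
            (((i : ℝ) + j + m) * (Nat.factorial ((j + 1 + n) - i - j - 1) : ℝ) *
              ∏ k ∈ Finset.range (i + 1), (m + 2 * j + i - k))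
        = ((-1 : ℝ) ^ i * (n.choose i : ℝ) *
            (∏ t ∈ Finset.range n, ((i : ℝ) + (m + 2 * (j : ℝ)) + t + 1)) /
              ((i : ℝ) + ((j : ℝ) + m))) /
            ((n.factorial : ℝ) * ((n + 1).factorial : ℝ)) := by
    intro i hi
    simp only [Finset.mem_range, Nat.lt_succ_iff] at hi
    have hNj : j + 1 + n - j = n + 1 := by omega
    have hNij : j + 1 + n - i - j - 1 = n - i := by omega
    rw [hNj, hNij]
    simp only [rbinom]
    -- product 1
    have hrefl : ∏ s ∈ Finset.range (n + 1), ((i : ℝ) + (m + 2 * (j : ℝ)) + ((n - s : ℕ) : ℝ))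
        = ∏ s ∈ Finset.range (n + 1), ((i : ℝ) + (m + 2 * (j : ℝ)) + (s : ℝ)) := by
      have h := Finset.prod_range_reflect
        (fun u : ℕ => (i : ℝ) + (m + 2 * (j : ℝ)) + (u : ℝ)) (n + 1)
      simpa using h
    have hprod1 : ∏ s ∈ Finset.range (n + 1),
          ((i : ℝ) + ((j + 1 + n : ℕ) : ℝ) + (j : ℝ) - 1 + m - (s : ℝ))
        = ((i : ℝ) + (m + 2 * (j : ℝ))) *
            ∏ t ∈ Finset.range n, ((i : ℝ) + (m + 2 * (j : ℝ)) + t + 1) := by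
      have e : ∏ s ∈ Finset.range (n + 1),
            ((i : ℝ) + ((j + 1 + n : ℕ) : ℝ) + (j : ℝ) - 1 + m - (s : ℝ))
          = ∏ s ∈ Finset.range (n + 1),
              ((i : ℝ) + (m + 2 * (j : ℝ)) + ((n - s : ℕ) : ℝ)) := by
        apply Finset.prod_congr rfl
        intro s hs
        simp only [Finset.mem_range, Nat.lt_succ_iff] at hs
        rw [Nat.cast_sub hs]
        push_cast
        ring
      rw [e, hrefl, Finset.prod_range_succ'
        (fun s : ℕ => (i : ℝ) + (m + 2 * (j : ℝ)) + (s : ℝ)) n, mul_comm]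
      congr 1
      · push_cast; ring
      · apply Finset.prod_congr rfl; intro t _; push_cast; ring
    -- product 2
    have hprod2 : ∏ s ∈ Finset.range i, (m + 2 * (j : ℝ) + (i : ℝ) - 1 - (s : ℝ))
        = ∏ s ∈ Finset.range i, (m + 2 * (j : ℝ) + (s : ℝ)) := by
      have e : ∏ s ∈ Finset.range i, (m + 2 * (j : ℝ) + (i : ℝ) - 1 - (s : ℝ))
          = ∏ s ∈ Finset.range i,
              ((fun u : ℕ => m + 2 * (j : ℝ) + (u : ℝ)) (i - 1 - s)) := by
        apply Finset.prod_congr rfl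
        intro s hs
        simp only [Finset.mem_range] at hs
        have h1 : s ≤ i - 1 := by omega
        have h2 : 1 ≤ i := by omega
        simp only []
        rw [Nat.cast_sub h1, Nat.cast_sub h2]
        push_cast
        ring
      rw [e]
      exact Finset.prod_range_reflect (fun u : ℕ => m + 2 * (j : ℝ) + (u : ℝ)) i
    -- product 3
    have hprod3 : ∏ k ∈ Finset.range (i + 1), (m + 2 * (j : ℝ) + (i : ℝ) - (k : ℝ))
        = (∏ s ∈ Finset.range i, (m + 2 * (j : ℝ) + (s : ℝ))) *
            (m + 2 * (j : ℝ) + (i : ℝ)) := by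
      have e : ∏ k ∈ Finset.range (i + 1), (m + 2 * (j : ℝ) + (i : ℝ) - (k : ℝ))
          = ∏ k ∈ Finset.range (i + 1), (m + 2 * (j : ℝ) + ((i - k : ℕ) : ℝ)) := by
        apply Finset.prod_congr rfl
        intro k hk
        simp only [Finset.mem_range, Nat.lt_succ_iff] at hk
        rw [Nat.cast_sub hk]
        ring
      have hrefl2 : ∏ k ∈ Finset.range (i + 1), (m + 2 * (j : ℝ) + ((i - k : ℕ) : ℝ))
          = ∏ k ∈ Finset.range (i + 1), (m + 2 * (j : ℝ) + (k : ℝ)) := by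
        have h := Finset.prod_range_reflect
          (fun u : ℕ => m + 2 * (j : ℝ) + (u : ℝ)) (i + 1)
        simpa using h
      rw [e, hrefl2, Finset.prod_range_succ]
    rw [hprod1, hprod2, hprod3]
    -- now pure algebra
    have hQ : (0 : ℝ) < ∏ s ∈ Finset.range i, (m + 2 * (j : ℝ) + (s : ℝ)) := by
      apply Finset.prod_pos; intro s _; positivity
    have hch : ((n.choose i : ℕ) : ℝ) * (i.factorial : ℝ) * ((n - i).factorial : ℝ)
        = (n.factorial : ℝ) := by
      exact_mod_cast congrArg (Nat.cast (R := ℝ))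
        (Nat.choose_mul_factorial_mul_factorial hi)
    rw [← hch]
    have h1 : ((i : ℝ) + (j : ℝ) + m) ≠ 0 := by positivity
    have h2 : (m + 2 * (j : ℝ) + (i : ℝ)) ≠ 0 := by positivity
    have h3 : ((i : ℝ) + (m + 2 * (j : ℝ))) ≠ 0 := by positivity
    have h4 : ((n.choose i : ℕ) : ℝ) ≠ 0 := by
      exact_mod_cast Nat.choose_pos hi |>.ne'
    have h5 : (i.factorial : ℝ) ≠ 0 := Nat.cast_ne_zero.mpr i.factorial_ne_zero
    have h6 : ((n - i).factorial : ℝ) ≠ 0 := Nat.cast_ne_zero.mpr (n - i).factorial_ne_zero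
    have h7 : (((n + 1).factorial : ℕ) : ℝ) ≠ 0 :=
      Nat.cast_ne_zero.mpr (n + 1).factorial_ne_zero
    field_simp
    ring
  rw [Finset.sum_congr rfl hterm, ← Finset.sum_div,
    keyF n ((j : ℝ) + m) (m + 2 * (j : ℝ)) (by positivity)]
  -- numerator product
  have hnum : ∏ t ∈ Finset.range n, (m + 2 * (j : ℝ) + t + 1 - ((j : ℝ) + m))
      = ((j + n).factorial : ℝ) / (j.factorial : ℝ) := by
    rw [← prodFact j n]
    apply Finset.prod_congr rfl; intro t _; ring
  rw [hnum]
  -- RHS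
  have hN1 : j + 1 + n - 1 = j + n := by omega
  rw [hN1]
  have hg : Real.Gamma (((j + 1 + n : ℕ) : ℝ) + m)
      = Real.Gamma ((j : ℝ) + m) * ∏ k ∈ Finset.range (n + 1), (((j : ℝ) + m) + k) := by
    have h : ((j + 1 + n : ℕ) : ℝ) + m = ((j : ℝ) + m) + ((n + 1 : ℕ) : ℝ) := by
      push_cast; ring
    rw [h, gammaProd _ (by positivity) (n + 1)]
  rw [hg]
  have hch2 : (((j + n).choose (j - 1) : ℕ) : ℝ) * ((j - 1).factorial : ℝ) *
      (((n + 1).factorial : ℕ) : ℝ) = (((j + n).factorial : ℕ) : ℝ) := by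
    have h := Nat.choose_mul_factorial_mul_factorial (show j - 1 ≤ j + n by omega)
    have h2 : j + n - (j - 1) = n + 1 := by omega
    rw [h2] at h
    exact_mod_cast congrArg (Nat.cast (R := ℝ)) h
  rw [← hch2]
  have hjf : (j.factorial : ℝ) = (j : ℝ) * ((j - 1).factorial : ℝ) := by
    have hj : j - 1 + 1 = j := by omega
    rw [← hj, Nat.factorial_succ]
    push_cast [hj]
    ring
  rw [hjf]
  have hG : Real.Gamma ((j : ℝ) + m) ≠ 0 := (Real.Gamma_pos_of_pos (by positivity)).ne'
  have hD : (0 : ℝ) < ∏ k ∈ Finset.range (n + 1), (((j : ℝ) + m) + k) := by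
    apply Finset.prod_pos; intro k _; positivity
  have hj0 : ((j : ℝ)) ≠ 0 := by positivity
  have hjf1 : ((j - 1).factorial : ℝ) ≠ 0 := Nat.cast_ne_zero.mpr (j - 1).factorial_ne_zero
  have hnf : ((n.factorial : ℕ) : ℝ) ≠ 0 := Nat.cast_ne_zero.mpr n.factorial_ne_zero
  have hnf1 : (((n + 1).factorial : ℕ) : ℝ) ≠ 0 :=
    Nat.cast_ne_zero.mpr (n + 1).factorial_ne_zero
  field_simp
end
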